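/- arXiv:1905.04298 — 5 statements merged into one kernel-verified Lean document; each statement's English description precedes it below -/
import Mathlib

section
/- The abelianization R^{ab} = R/R' is generated as a ℤ[H₀]-module by the classes of the three elements aⁿ, bⁿ and [a,b]. -/
namespace Fermat

open scoped commutatorElement

/-- The free group on two generators. -/
abbrev F2 : Type := FreeGroup (Fin 2)

/-- The first generator `a` of `F₂`. -/
def a : F2 := FreeGroup.of 0

/-- The second generator `b` of `F₂`. -/
def b : F2 := FreeGroup.of 1

/-- The group `H₀ = (ℤ/nℤ) × (ℤ/nℤ)`, written multiplicatively. -/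
abbrev H0 (n : ℕ) : Type := Multiplicative (ZMod n × ZMod n)

/-- The homomorphism `φ : F₂ → (ℤ/nℤ) × (ℤ/nℤ)` with `φ(a) = (1,0)`, `φ(b) = (0,1)`. -/
def phi (n : ℕ) : F2 →* H0 n :=
  FreeGroup.lift fun i =>
    Multiplicative.ofAdd (if i = (0 : Fin 2) then ((1 : ZMod n), (0 : ZMod n)) else (0, 1))

/-- `R = ker φ`, the fundamental group of the open Fermat curve of exponent `n`. -/
abbrev R (n : ℕ) : Subgroup F2 := (phi n).ker

theorem pow_n_mem (n : ℕ) (x : F2) : x ^ n ∈ R n := by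
  rw [MonoidHom.mem_ker, map_pow]
  have h : n • Multiplicative.toAdd (phi n x) = 0 := by
    ext <;> simp [ZMod.natCast_self]
  calc (phi n x) ^ n
      = Multiplicative.ofAdd (n • Multiplicative.toAdd (phi n x)) := by
        rw [ofAdd_nsmul, ofAdd_toAdd]
    _ = 1 := by rw [h]; rfl

theorem commutator_mem (n : ℕ) (x y : F2) : ⁅x, y⁆ ∈ R n := by
  rw [MonoidHom.mem_ker, map_commutatorElement, commutatorElement_eq_one_iff_commute]
  exact Commute.all _ _

theorem conj_mem (n : ℕ) (g x : F2) (hx : x ∈ R n) : g * x * g⁻¹ ∈ R n :=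
  Subgroup.Normal.conj_mem inferInstance x hx g

/-- The abelianization `R^{ab} = R/R'` of the fundamental group `R`. -/
abbrev Ab (n : ℕ) : Type := Abelianization ↥(R n)

/-- The class `[x] ∈ R^{ab}` of an element `x ∈ R`. -/
def cls (n : ℕ) (x : F2) (hx : x ∈ R n) : Ab n := Abelianization.of ⟨x, hx⟩

/-- The class `[g x g⁻¹] ∈ R^{ab}`; for `h = φ(g) ∈ H₀` this is the value `h·[x]` of the
conjugation action of `H₀` on `R^{ab}`. -/
def conjCl (n : ℕ) (g x : F2) (hx : x ∈ R n) : Ab n :=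
  cls n (g * x * g⁻¹) (conj_mem n g x hx)

/-- The endomorphism of `R^{ab}` induced by conjugation by `g ∈ F₂`; for `h = φ(g)` this
is the action of `h ∈ H₀` on `R^{ab}`. -/
def conjHom (n : ℕ) (g : F2) : Ab n →* Ab n :=
  Abelianization.map (MulAut.conjNormal g).toMonoidHom


-- auxiliary
lemma pow_mod_eq {G : Type*} [Group G] {x : G} {n : ℕ} (hx : x ^ n = 1) (k : ℕ) :
    x ^ (k % n) = x ^ k := by
  conv_rhs => rw [← Nat.div_add_mod k n]
  rw [pow_add, pow_mul, hx, one_pow, one_mul]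

lemma R_eq_normalClosure (n : ℕ) (hn : 2 ≤ n) :
    R n = Subgroup.normalClosure ({a ^ n, b ^ n, ⁅a, b⁆} : Set F2) := by
  haveI : NeZero n := ⟨by omega⟩
  haveI : Fact (1 < n) := ⟨by omega⟩
  set N := Subgroup.normalClosure ({a ^ n, b ^ n, ⁅a, b⁆} : Set F2) with hN
  apply le_antisymm
  · -- hard direction
    set π := QuotientGroup.mk' N with hπ
    have hmem : ∀ x ∈ ({a ^ n, b ^ n, ⁅a, b⁆} : Set F2), π x = 1 := by
      intro x hx
      rw [← MonoidHom.mem_ker, QuotientGroup.ker_mk']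
      exact Subgroup.subset_normalClosure hx
    have ha : (π a) ^ n = 1 := by rw [← map_pow]; exact hmem _ (by simp)
    have hb : (π b) ^ n = 1 := by rw [← map_pow]; exact hmem _ (by simp)
    have hcomm : Commute (π a) (π b) := by
      rw [← commutatorElement_eq_one_iff_commute, ← map_commutatorElement]
      exact hmem _ (by simp)
    -- the section σ : H0 n →* F2 ⧸ N
    have key : ∀ (i i' : ZMod n) (x : F2 ⧸ N), x ^ n = 1 →
        x ^ (i + i').val = x ^ i.val * x ^ i'.val := by
      intro i i' x hx
      rw [ZMod.val_add, pow_mod_eq hx, pow_add]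
    set σ : H0 n →* F2 ⧸ N := MonoidHom.mk'
      (fun h => (π a) ^ (Multiplicative.toAdd h).1.val * (π b) ^ (Multiplicative.toAdd h).2.val)
      (by
        intro x y
        show (π a) ^ ((Multiplicative.toAdd x).1 + (Multiplicative.toAdd y).1).val *
            (π b) ^ ((Multiplicative.toAdd x).2 + (Multiplicative.toAdd y).2).val = _
        rw [key _ _ _ ha, key _ _ _ hb]
        have h1 : Commute ((π b) ^ (Multiplicative.toAdd x).2.val)
            ((π a) ^ (Multiplicative.toAdd y).1.val) := (hcomm.symm.pow_pow _ _)
        rw [mul_assoc, mul_assoc, ← mul_assoc ((π b) ^ _), h1.eq]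
        simp [mul_assoc])
      with hσ
    have hcomp : σ.comp (phi n) = π := by
      apply FreeGroup.ext_hom
      intro i
      fin_cases i
      · show σ (phi n a) = π a
        have : phi n a = Multiplicative.ofAdd ((1 : ZMod n), (0 : ZMod n)) := by
          simp [phi, a]
        rw [this]
        show (π a) ^ (1 : ZMod n).val * (π b) ^ (0 : ZMod n).val = π a
        rw [ZMod.val_one, ZMod.val_zero, pow_one, pow_zero, mul_one]
      · show σ (phi n b) = π b
        have : phi n b = Multiplicative.ofAdd ((0 : ZMod n), (1 : ZMod n)) := by
          simp [phi, b]
        rw [this]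
        show (π a) ^ (0 : ZMod n).val * (π b) ^ (1 : ZMod n).val = π b
        rw [ZMod.val_one, ZMod.val_zero, pow_one, pow_zero, one_mul]
    intro x hx
    have : π x = 1 := by
      rw [← hcomp]
      show σ (phi n x) = 1
      rw [MonoidHom.mem_ker.mp hx, map_one]
    exact (QuotientGroup.eq_one_iff x).mp this
  · apply Subgroup.normalClosure_le_normal
    intro x hx
    rcases hx with h | h | h
    · exact h ▸ pow_n_mem n a
    · exact h ▸ pow_n_mem n b
    · simp only [Set.mem_singleton_iff] at h; exact h ▸ commutator_mem n a b

/-- `R^{ab}` is generated as a `ℤ[H₀]`-module by the classes of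
`aⁿ`, `bⁿ` and `[a,b]`.  Since the `ℤ[H₀]`-span of a set of classes is the subgroup of
`R^{ab}` generated by the `H₀`-orbits, and the action of `h = φ(g)` on a class `[r]` is
the class `[g r g⁻¹]`, this says that the subgroup of `R^{ab}` generated by all
conjugate classes `[g r g⁻¹]`, `g ∈ F₂`, `r ∈ {aⁿ, bⁿ, [a,b]}`, is all of `R^{ab}`. -/
theorem statement2 (n : ℕ) (hn : 2 ≤ n) :
    Subgroup.closure {z : Ab n | ∃ g : F2,
        z = conjCl n g (a ^ n) (pow_n_mem n a) ∨
        z = conjCl n g (b ^ n) (pow_n_mem n b) ∨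
        z = conjCl n g ⁅a, b⁆ (commutator_mem n a b)} = ⊤ := by
  set S := Subgroup.closure {z : Ab n | ∃ g : F2,
        z = conjCl n g (a ^ n) (pow_n_mem n a) ∨
        z = conjCl n g (b ^ n) (pow_n_mem n b) ∨
        z = conjCl n g ⁅a, b⁆ (commutator_mem n a b)} with hS
  -- subgroup of F2 of elements of R whose class is in S
  set K : Subgroup F2 :=
    (S.comap (Abelianization.of : ↥(R n) →* Ab n)).map (R n).subtype with hK
  have hcls : ∀ (x y : F2) (hx : x ∈ R n) (hy : y ∈ R n), x = y →
      (Abelianization.of (⟨x, hx⟩ : ↥(R n)) : Ab n) = Abelianization.of (⟨y, hy⟩ : ↥(R n)) := by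
    intro x y hx hy h
    subst h
    rfl
  have hRK : R n ≤ K := by
    rw [R_eq_normalClosure n hn, Subgroup.normalClosure, Subgroup.closure_le]
    intro y hy
    rw [Group.mem_conjugatesOfSet_iff] at hy
    obtain ⟨r, hr, hconj⟩ := hy
    obtain ⟨c, hc⟩ := hconj
    have hy' : y = (↑c : F2) * r * (↑c : F2)⁻¹ := by
      rw [eq_mul_inv_iff_mul_eq]; exact hc.eq.symm
    have hrR : r ∈ R n := by
      rcases hr with h | h | h
      · exact h ▸ pow_n_mem n a
      · exact h ▸ pow_n_mem n b
      · simp only [Set.mem_singleton_iff] at h; exact h ▸ commutator_mem n a b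
    have hyR : y ∈ R n := hy' ▸ conj_mem n (↑c) r hrR
    refine ⟨⟨y, hyR⟩, ?_, rfl⟩
    show Abelianization.of (⟨y, hyR⟩ : ↥(R n)) ∈ S
    apply Subgroup.subset_closure
    refine ⟨(↑c : F2), ?_⟩
    rcases hr with h | h | h
    · left
      subst h
      exact hcls _ _ _ _ hy'
    · right; left
      subst h
      exact hcls _ _ _ _ hy'
    · right; right
      simp only [Set.mem_singleton_iff] at h
      subst h
      exact hcls _ _ _ _ hy'
  rw [eq_top_iff]
  intro z _
  induction z using QuotientGroup.induction_on with
  | H w =>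
    obtain ⟨x, hx⟩ := w
    obtain ⟨x', hx', hval⟩ := hRK hx
    have : (⟨x, hx⟩ : ↥(R n)) = x' := Subtype.ext hval.symm
    rw [this]
    exact hx'


end Fermat
end

section
/- For each fixed i with 0 ≤ i ≤ n−2, the ℤ-submodule of R^{ab} generated by the set {(αⁱ)·[[bʲ,a]] : 1 ≤ j ≤ n−1} is equal to the ℤ-submodule generated by the set {(αⁱβʲ)·[[b,a]] : 0 ≤ j ≤ n−2}. -/
namespace Fermat

open scoped commutatorElement

lemma cls_eq (n : ℕ) {x y : F2} (hx : x ∈ R n) (hy : y ∈ R n) (h : x = y) :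
    cls n x hx = cls n y hy := by subst h; rfl

lemma cls_mul (n : ℕ) {x y : F2} (hx : x ∈ R n) (hy : y ∈ R n) :
    cls n (x * y) (mul_mem hx hy) = cls n x hx * cls n y hy := by
  unfold cls
  rw [← map_mul]
  rfl

lemma key (n i j : ℕ) :
    conjCl n (a ^ i) ⁅b ^ (j + 1), a⁆ (commutator_mem n (b ^ (j + 1)) a) =
      conjCl n (a ^ i * b ^ j) ⁅b, a⁆ (commutator_mem n b a) *
        conjCl n (a ^ i) ⁅b ^ j, a⁆ (commutator_mem n (b ^ j) a) := by
  unfold conjCl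
  refine (cls_eq n _ (mul_mem (conj_mem n _ _ (commutator_mem n b a))
      (conj_mem n _ _ (commutator_mem n (b ^ j) a))) ?_).trans (cls_mul n _ _)
  simp only [commutatorElement_def]
  group

lemma conjCl_comm_zero (n i : ℕ) :
    conjCl n (a ^ i) ⁅b ^ 0, a⁆ (commutator_mem n (b ^ 0) a) = 1 := by
  unfold conjCl
  refine (cls_eq n _ (one_mem _) ?_).trans (map_one Abelianization.of)
  simp only [commutatorElement_def]
  group

lemma mem_rhs (n i : ℕ) : ∀ j : ℕ, j ≤ n - 1 →
    conjCl n (a ^ i) ⁅b ^ j, a⁆ (commutator_mem n (b ^ j) a) ∈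
      Subgroup.closure {z : Ab n | ∃ j : Fin (n - 1),
        z = conjCl n (a ^ i * b ^ (j : ℕ)) ⁅b, a⁆ (commutator_mem n b a)} := by
  intro j
  induction j with
  | zero => intro _; rw [conjCl_comm_zero]; exact one_mem _
  | succ k ih =>
    intro hk
    rw [key]
    exact mul_mem (Subgroup.subset_closure ⟨⟨k, by omega⟩, rfl⟩) (ih (by omega))

lemma mem_lhs_aux (n i : ℕ) : ∀ j : ℕ, j ≤ n - 1 →
    conjCl n (a ^ i) ⁅b ^ j, a⁆ (commutator_mem n (b ^ j) a) ∈
      Subgroup.closure {z : Ab n | ∃ j : Fin (n - 1),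
        z = conjCl n (a ^ i) ⁅b ^ ((j : ℕ) + 1), a⁆ (commutator_mem n (b ^ ((j : ℕ) + 1)) a)} := by
  intro j hj
  match j, hj with
  | 0, _ => rw [conjCl_comm_zero]; exact one_mem _
  | (k + 1), hj => exact Subgroup.subset_closure ⟨⟨k, by omega⟩, rfl⟩

lemma mem_lhs (n i : ℕ) (j : ℕ) (hj : j < n - 1) :
    conjCl n (a ^ i * b ^ j) ⁅b, a⁆ (commutator_mem n b a) ∈
      Subgroup.closure {z : Ab n | ∃ j : Fin (n - 1),
        z = conjCl n (a ^ i) ⁅b ^ ((j : ℕ) + 1), a⁆ (commutator_mem n (b ^ ((j : ℕ) + 1)) a)} := by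
  have h := key n i j
  have : conjCl n (a ^ i * b ^ j) ⁅b, a⁆ (commutator_mem n b a) =
      conjCl n (a ^ i) ⁅b ^ (j + 1), a⁆ (commutator_mem n (b ^ (j + 1)) a) *
        (conjCl n (a ^ i) ⁅b ^ j, a⁆ (commutator_mem n (b ^ j) a))⁻¹ := by
    rw [h]; group
  rw [this]
  exact mul_mem (Subgroup.subset_closure ⟨⟨j, hj⟩, rfl⟩)
    (inv_mem (mem_lhs_aux n i j (by omega)))

/-- for each fixed `0 ≤ i ≤ n-2`, the `ℤ`-submodule (= subgroup) of
`R^{ab}` generated by `{αⁱ·[[bʲ,a]] : 1 ≤ j ≤ n-1}` equals the one generated by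
`{(αⁱβʲ)·[[b,a]] : 0 ≤ j ≤ n-2}` (the action of `α`, `β` being conjugation by `a`,
`b`). -/
theorem statement4 (n : ℕ) (hn : 2 ≤ n) (i : ℕ) (hi : i ≤ n - 2) :
    Subgroup.closure {z : Ab n | ∃ j : Fin (n - 1),
        z = conjCl n (a ^ i) ⁅b ^ ((j : ℕ) + 1), a⁆ (commutator_mem n (b ^ ((j : ℕ) + 1)) a)} =
    Subgroup.closure {z : Ab n | ∃ j : Fin (n - 1),
        z = conjCl n (a ^ i * b ^ (j : ℕ)) ⁅b, a⁆ (commutator_mem n b a)} := by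
  apply le_antisymm <;> rw [Subgroup.closure_le] <;> rintro z ⟨j, rfl⟩
  · exact mem_rhs n i ((j : ℕ) + 1) (by omega)
  · exact mem_lhs n i (j : ℕ) j.isLt

end Fermat
end

section
/- In R^{ab} the following identity holds for every n ≥ 2: [(ab)ⁿ] = ( Σ_{m=1}^{n−1} α^m · Σ_{ν=0}^{m−1} β^ν )·[[b,a]] + [aⁿ] + [bⁿ], where the sum of group-ring elements acts on the class [[b,a]]. -/
open scoped commutatorElement

section GroupLemmas
variable {G : Type*} [Group G]

/-- ordered product over `List.range n` -/
def rprod (f : ℕ → G) (n : ℕ) : G := ((List.range n).map f).prod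

lemma rprod_succ (f : ℕ → G) (n : ℕ) : rprod f (n+1) = rprod f n * f n :=
  List.prod_range_succ f n

lemma rprod_zero (f : ℕ → G) : rprod f 0 = 1 := rfl

lemma conj_rprod (g : G) (f : ℕ → G) (n : ℕ) :
    g * rprod f n * g⁻¹ = rprod (fun i => g * f i * g⁻¹) n := by
  induction n with
  | zero => simp [rprod_zero]
  | succ n ih => rw [rprod_succ, rprod_succ, ← ih]; group

lemma rprod_congr {f g : ℕ → G} (n : ℕ) (h : ∀ i < n, f i = g i) :
    rprod f n = rprod g n := by
  induction n with
  | zero => rfl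
  | succ n ih =>
    rw [rprod_succ, rprod_succ, h n (by omega), ih (fun i hi => h i (by omega))]

lemma conj_rprod' (g : G) (f f' : ℕ → G) (n : ℕ)
    (h : ∀ i < n, f' i = g * f i * g⁻¹) :
    g * rprod f n * g⁻¹ = rprod f' n := by
  rw [conj_rprod]
  exact (rprod_congr n h).symm

lemma rprod_mem (H : Subgroup G) (f : ℕ → G) (m : ℕ) (h : ∀ i < m, f i ∈ H) :
    rprod f m ∈ H := by
  induction m with
  | zero => rw [rprod_zero]; exact one_mem H
  | succ m ih =>
    rw [rprod_succ]
    exact mul_mem (ih (fun i hi => h i (by omega))) (h m (by omega))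

lemma L1 (x y : G) (n : ℕ) :
    (x * y) ^ n = x ^ n * rprod (fun i => x ^ (-((n : ℤ) - 1 - i)) * y * x ^ ((n : ℤ) - 1 - i)) n := by
  induction n with
  | zero => simp [rprod_zero]
  | succ n ih =>
    rw [rprod_succ]
    have h2 : x⁻¹ * rprod (fun i => x ^ (-((n : ℤ) - 1 - i)) * y * x ^ ((n : ℤ) - 1 - i)) n * x
        = rprod (fun i => x ^ (-(((n:ℕ)+1 : ℤ) - 1 - i)) * y * x ^ (((n:ℕ)+1 : ℤ) - 1 - i)) n := by
      have := conj_rprod' x⁻¹ (fun i => x ^ (-((n : ℤ) - 1 - i)) * y * x ^ ((n : ℤ) - 1 - i))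
        (fun i => x ^ (-(((n:ℕ)+1 : ℤ) - 1 - i)) * y * x ^ (((n:ℕ)+1 : ℤ) - 1 - i)) n ?_
      · rw [inv_inv] at this; exact this
      intro i hi
      have e1 : (((n:ℕ)+1 : ℤ) - 1 - i) = ((n : ℤ) - 1 - i) + 1 := by push_cast; ring
      rw [inv_inv, e1, zpow_add, zpow_one, neg_add, zpow_add, zpow_neg, zpow_neg_one]
      group
    push_cast at h2 ⊢
    rw [← h2]
    have e2 : ((n:ℤ) + 1 - 1 - n) = 0 := by ring
    rw [e2]
    simp only [neg_zero, zpow_zero, one_mul, mul_one]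
    rw [pow_succ, ih]
    group

lemma L2 (y : G) (n : ℕ) (L : ℕ → G) :
    rprod (fun i => L i * y) n
      = rprod (fun i => y ^ i * L i * (y ^ i)⁻¹) n * y ^ n := by
  induction n with
  | zero => simp [rprod_zero]
  | succ n ih =>
    rw [rprod_succ, rprod_succ, ih, pow_succ]
    have : y ^ n * L n * (y ^ n)⁻¹ * (y ^ n * y) = y ^ n * (L n * y) := by
      group
    rw [mul_assoc, mul_assoc, this]

lemma L3 (x y : G) (k : ℕ) :
    x ^ (-(k : ℤ)) * y * x ^ (k : ℤ) * y⁻¹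
      = rprod (fun s => x ^ ((s : ℤ) - k) * ⁅y, x⁆ * x ^ ((k : ℤ) - s)) k := by
  induction k with
  | zero => simp [rprod_zero]
  | succ k ih =>
    rw [rprod_succ]
    have h2 : x⁻¹ * rprod (fun s => x ^ ((s : ℤ) - k) * ⁅y, x⁆ * x ^ ((k : ℤ) - s)) k * x
        = rprod (fun s => x ^ ((s:ℤ) - ((k:ℕ)+1:ℤ)) * ⁅y, x⁆ * x ^ (((k:ℕ)+1:ℤ) - s)) k := by
      have := conj_rprod' x⁻¹ (fun s => x ^ ((s : ℤ) - k) * ⁅y, x⁆ * x ^ ((k : ℤ) - s))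
        (fun s => x ^ ((s:ℤ) - ((k:ℕ)+1:ℤ)) * ⁅y, x⁆ * x ^ (((k:ℕ)+1:ℤ) - s)) k ?_
      · rw [inv_inv] at this; exact this
      intro s hs
      have e1 : ((s : ℤ) - ((k:ℕ)+1 : ℤ)) = ((s:ℤ) - k) + (-1) := by push_cast; ring
      have e2 : (((k:ℕ)+1 : ℤ) - s) = ((k:ℤ) - s) + 1 := by push_cast; ring
      rw [inv_inv, e1, e2, zpow_add, zpow_add, zpow_one, zpow_neg_one]
      group
    push_cast at h2 ⊢
    rw [← h2, ← ih]
    have e3 : ((k:ℤ) - ((k:ℤ) + 1)) = -1 := by ring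
    have e4 : ((k:ℤ) + 1 - k) = 1 := by ring
    rw [e3, e4, zpow_neg_one, zpow_one]
    have e5 : (-((k:ℤ)+1)) = (-(k:ℤ)) + (-1) := by ring
    rw [e5, zpow_add, zpow_neg_one, zpow_add x (k:ℤ) 1, zpow_one, commutatorElement_def]
    group

end GroupLemmas

section Reindex
variable {M : Type*} [CommMonoid M]

lemma reindex_prod (n : ℕ) (f : ℕ → ℕ → M) :
    ∏ i ∈ Finset.range n, ∏ s ∈ Finset.range (n-1-i), f (s+i+1) i
      = ∏ m ∈ Finset.Ico 1 n, ∏ ν ∈ Finset.range m, f m ν := by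
  have h1 : ∀ i ∈ Finset.range n,
      ∏ s ∈ Finset.range (n-1-i), f (s+i+1) i = ∏ m ∈ Finset.Ico (i+1) n, f m i := by
    intro i _
    rw [Finset.prod_Ico_eq_prod_range]
    refine Finset.prod_congr (by congr 1; omega) ?_
    intro s _
    congr 1
    omega
  rw [Finset.prod_congr rfl h1]
  refine Finset.prod_comm' ?_
  intro x y
  simp only [Finset.mem_range, Finset.mem_Ico]
  omega

end Reindex

namespace Fermat

/-- Total version of `cls`. -/
noncomputable def clsT (n : ℕ) (x : F2) : Ab n :=
  if h : x ∈ R n then cls n x h else 1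

lemma clsT_eq (n : ℕ) {x : F2} (h : x ∈ R n) : clsT n x = cls n x h := dif_pos h

lemma clsT_mul (n : ℕ) {x y : F2} (hx : x ∈ R n) (hy : y ∈ R n) :
    clsT n (x * y) = clsT n x * clsT n y := by
  rw [clsT_eq n (mul_mem hx hy), clsT_eq n hx, clsT_eq n hy]
  unfold cls
  have : (⟨x * y, mul_mem hx hy⟩ : ↥(R n)) = ⟨x, hx⟩ * ⟨y, hy⟩ := rfl
  rw [this, map_mul]

lemma clsT_rprod (n : ℕ) (f : ℕ → F2) (m : ℕ) (hf : ∀ i < m, f i ∈ R n) :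
    clsT n (rprod f m) = ∏ i ∈ Finset.range m, clsT n (f i) := by
  induction m with
  | zero =>
    rw [rprod_zero, clsT_eq n (one_mem (R n))]
    show Abelianization.of (1 : ↥(R n)) = 1
    exact map_one _
  | succ m ih =>
    rw [rprod_succ, Finset.prod_range_succ,
      clsT_mul n (rprod_mem (R n) f m (fun i hi => hf i (by omega))) (hf m (by omega)),
      ih (fun i hi => hf i (by omega))]

lemma clsT_conj (n : ℕ) {p q : F2} (hp : p ∈ R n) (hq : q ∈ R n) :
    clsT n (p * q * p⁻¹) = clsT n q := by
  have h1 : p * q * p⁻¹ ∈ R n := conj_mem n p q hq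
  rw [clsT_eq n h1, clsT_eq n hq]
  unfold cls
  have : (⟨p * q * p⁻¹, h1⟩ : ↥(R n)) = ⟨p, hp⟩ * ⟨q, hq⟩ * (⟨p, hp⟩)⁻¹ := rfl
  rw [this, map_mul, map_mul, map_inv]
  exact mul_inv_cancel_comm _ _

lemma clsT_conj_phi (n : ℕ) {x g g' : F2} (hx : x ∈ R n) (hg : phi n g = phi n g') :
    clsT n (g * x * g⁻¹) = clsT n (g' * x * g'⁻¹) := by
  have hp : g' * g⁻¹ ∈ R n := by
    rw [MonoidHom.mem_ker, map_mul, map_inv, hg, mul_inv_cancel]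
  have h : g' * x * g'⁻¹ = (g' * g⁻¹) * (g * x * g⁻¹) * (g' * g⁻¹)⁻¹ := by group
  rw [h, clsT_conj n hp (conj_mem n g x hx)]

lemma phi_a_pow (n : ℕ) : (phi n a) ^ n = 1 := by
  have := pow_n_mem n a
  rwa [MonoidHom.mem_ker, map_pow] at this

lemma phi_eq_key (n i s : ℕ) (hi : i < n) (hs : s < n - 1 - i) :
    phi n (b ^ i * a ^ ((s:ℤ) - ((n-1-i : ℕ) : ℤ))) = phi n (a ^ (s+i+1) * b ^ i) := by
  rw [map_mul, map_mul, map_zpow, map_pow, map_pow, mul_comm]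
  congr 1
  have e : ((s:ℤ) - ((n-1-i : ℕ) : ℤ)) = ((s+i+1 : ℕ) : ℤ) - (n : ℤ) := by
    push_cast
    omega
  rw [e, zpow_sub, zpow_natCast, zpow_natCast, phi_a_pow, inv_one, mul_one]

lemma main' (n : ℕ) :
    clsT n ((a * b) ^ n) =
      (∏ m ∈ Finset.Ico 1 n, ∏ ν ∈ Finset.range m,
          clsT n ((a ^ m * b ^ ν) * ⁅b, a⁆ * (a ^ m * b ^ ν)⁻¹)) *
        clsT n (a ^ n) * clsT n (b ^ n) := by
  have hE : rprod (fun i => a ^ (-((n:ℤ)-1-i)) * b * a ^ ((n:ℤ)-1-i)) n ∈ R n := by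
    have h : rprod (fun i => a ^ (-((n:ℤ)-1-i)) * b * a ^ ((n:ℤ)-1-i)) n
        = (a ^ n)⁻¹ * (a * b) ^ n := by
      rw [L1 a b n]; group
    rw [h]; exact mul_mem (inv_mem (pow_n_mem n a)) (pow_n_mem n (a * b))
  have hL : ∀ i : ℕ, a ^ (-((n:ℤ)-1-i)) * b * a ^ ((n:ℤ)-1-i) * b⁻¹ ∈ R n := by
    intro i
    have h : a ^ (-((n:ℤ)-1-i)) * b * a ^ ((n:ℤ)-1-i) * b⁻¹ = ⁅a ^ (-((n:ℤ)-1-i)), b⁆ := by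
      rw [commutatorElement_def]; group
    rw [h]; exact commutator_mem n _ _
  have hFac : ∀ i : ℕ,
      b ^ i * (a ^ (-((n:ℤ)-1-i)) * b * a ^ ((n:ℤ)-1-i) * b⁻¹) * (b ^ i)⁻¹ ∈ R n :=
    fun i => conj_mem n _ _ (hL i)
  have key2 : rprod (fun i => a ^ (-((n:ℤ)-1-i)) * b * a ^ ((n:ℤ)-1-i)) n
      = rprod (fun i => b ^ i * (a ^ (-((n:ℤ)-1-i)) * b * a ^ ((n:ℤ)-1-i) * b⁻¹) * (b ^ i)⁻¹) n
          * b ^ n := by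
    rw [← L2 b n (fun i => a ^ (-((n:ℤ)-1-i)) * b * a ^ ((n:ℤ)-1-i) * b⁻¹)]
    refine rprod_congr n ?_
    intro i _
    group
  have key3 : ∀ i < n,
      clsT n (b ^ i * (a ^ (-((n:ℤ)-1-i)) * b * a ^ ((n:ℤ)-1-i) * b⁻¹) * (b ^ i)⁻¹)
        = ∏ s ∈ Finset.range (n-1-i),
            clsT n ((a ^ (s+i+1) * b ^ i) * ⁅b, a⁆ * (a ^ (s+i+1) * b ^ i)⁻¹) := by
    intro i hi
    have ek : ((n:ℤ) - 1 - i) = ((n-1-i : ℕ) : ℤ) := by push_cast; omega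
    rw [ek, L3 a b (n-1-i), conj_rprod (b ^ i) _ (n-1-i)]
    have hterm := rprod_congr
      (f := fun s => b ^ i * (a ^ ((s:ℤ) - ((n-1-i:ℕ):ℤ)) * ⁅b, a⁆ * a ^ (((n-1-i:ℕ):ℤ) - s)) * (b ^ i)⁻¹)
      (g := fun s => (b ^ i * a ^ ((s:ℤ) - ((n-1-i:ℕ):ℤ))) * ⁅b, a⁆
          * (b ^ i * a ^ ((s:ℤ) - ((n-1-i:ℕ):ℤ)))⁻¹)
      (n-1-i) ?_
    · rw [hterm, clsT_rprod n _ (n-1-i)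
        (fun s _ => conj_mem n _ _ (commutator_mem n b a))]
      refine Finset.prod_congr rfl ?_
      intro s hs
      exact clsT_conj_phi n (commutator_mem n b a)
        (phi_eq_key n i s hi (Finset.mem_range.mp hs))
    · intro s _
      have e : (((n-1-i:ℕ):ℤ) - s) = -((s:ℤ) - ((n-1-i:ℕ):ℤ)) := by ring
      rw [e, zpow_neg]
      group
  rw [L1 a b n, clsT_mul n (pow_n_mem n a) hE, key2,
    clsT_mul n (rprod_mem (R n) _ n (fun i _ => hFac i)) (pow_n_mem n b),
    clsT_rprod n _ n (fun i _ => hFac i)]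
  rw [Finset.prod_congr rfl (fun i hi => key3 i (Finset.mem_range.mp hi))]
  rw [reindex_prod n (fun m ν => clsT n ((a ^ m * b ^ ν) * ⁅b, a⁆ * (a ^ m * b ^ ν)⁻¹))]
  rw [mul_left_comm, ← mul_assoc]

/-- in `R^{ab}` (written here multiplicatively; the `NL` statement is the
same identity written additively) one has, for every `n ≥ 2`,
`[(ab)ⁿ] = (Σ_{m=1}^{n-1} α^m Σ_{ν=0}^{m-1} β^ν)·[[b,a]] + [aⁿ] + [bⁿ]`, where
`(α^m β^ν)·[[b,a]]` is the class `[a^m b^ν [b,a] b^{-ν} a^{-m}]`. -/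
theorem statement6 (n : ℕ) (hn : 2 ≤ n) :
    cls n ((a * b) ^ n) (pow_n_mem n (a * b)) =
      (∏ m ∈ Finset.Ico 1 n, ∏ ν ∈ Finset.range m,
          conjCl n (a ^ m * b ^ ν) ⁅b, a⁆ (commutator_mem n b a)) *
        cls n (a ^ n) (pow_n_mem n a) * cls n (b ^ n) (pow_n_mem n b) := by
  have h := main' n
  rw [clsT_eq n (pow_n_mem n (a * b)), clsT_eq n (pow_n_mem n a),
    clsT_eq n (pow_n_mem n b)] at h
  rw [h]
  congr 1
  congr 1
  refine Finset.prod_congr rfl fun m _ => Finset.prod_congr rfl fun ν _ => ?_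
  rw [clsT_eq n (conj_mem n (a ^ m * b ^ ν) ⁅b, a⁆ (commutator_mem n b a))]
  rfl

end Fermat
end

section
/- Let σ₁, σ₂ be the automorphisms of F₂ determined by σ₁(a) = a b a⁻¹, σ₁(b) = a and σ₂(a) = a, σ₂(b) = a⁻¹ b⁻¹. Both preserve R and hence induce ℤ-linear endomorphisms of R^{ab}, which satisfy: σ₁( (αⁱβʲ)·[[b,a]] ) = −(α^{j+1}βⁱ)·[[b,a]], σ₂( (αⁱβʲ)·[[b,a]] ) = −(α^{i−j}β^{−j})·[[b⁻¹,a⁻¹]], σ₁( (αⁱ)·[bⁿ] ) = (βⁱ)·[aⁿ], σ₁( (βʲ)·[aⁿ] ) = (α^{j+1})·[bⁿ], σ₂( (αⁱ)·[bⁿ] ) = −(αⁱ)·[(ba)ⁿ], and σ₂( (βʲ)·[aⁿ] ) = ((βα)^{−j})·[aⁿ]. -/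
namespace Fermat

open scoped commutatorElement

lemma phi_a (n : ℕ) : phi n a = Multiplicative.ofAdd ((1 : ZMod n), (0 : ZMod n)) := by
  simp [phi, a]

lemma phi_b (n : ℕ) : phi n b = Multiplicative.ofAdd ((0 : ZMod n), (1 : ZMod n)) := by
  simp [phi, b]

lemma cls_congr (n : ℕ) {x y : F2} (h : x = y) (hx : x ∈ R n) (hy : y ∈ R n) :
    cls n x hx = cls n y hy := by subst h; rfl

lemma cls_inv (n : ℕ) (x : F2) (hx : x ∈ R n) (hx' : x⁻¹ ∈ R n) :
    cls n x⁻¹ hx' = (cls n x hx)⁻¹ := by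
  unfold cls
  rw [← map_inv]
  rfl

lemma conjCl_inv (n : ℕ) (g x : F2) (hx : x ∈ R n) (hx' : x⁻¹ ∈ R n) :
    (conjCl n g x hx)⁻¹ = conjCl n g x⁻¹ hx' := by
  unfold conjCl
  rw [← cls_inv n _ (conj_mem n g x hx) (inv_mem (conj_mem n g x hx))]
  exact cls_congr n (by group) _ _

lemma conj_key (n : ℕ) (g₁ g₂ x : F2) (hx : x ∈ R n) (h : phi n g₁ = phi n g₂) :
    conjCl n g₁ x hx = conjCl n g₂ x hx := by
  have hr : g₁ * g₂⁻¹ ∈ R n := by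
    rw [MonoidHom.mem_ker, map_mul, map_inv, h, mul_inv_cancel]
  have he : g₁ * x * g₁⁻¹ = (g₁ * g₂⁻¹) * (g₂ * x * g₂⁻¹) * (g₁ * g₂⁻¹)⁻¹ := by group
  unfold conjCl
  rw [cls_congr n he (conj_mem n g₁ x hx) (conj_mem n _ _ (conj_mem n g₂ x hx))]
  unfold cls
  have : (⟨(g₁ * g₂⁻¹) * (g₂ * x * g₂⁻¹) * (g₁ * g₂⁻¹)⁻¹, conj_mem n _ _ (conj_mem n g₂ x hx)⟩ : R n)
      = ⟨g₁ * g₂⁻¹, hr⟩ * ⟨g₂ * x * g₂⁻¹, conj_mem n g₂ x hx⟩ * (⟨g₁ * g₂⁻¹, hr⟩)⁻¹ := rfl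
  rw [this, map_mul, map_mul, map_inv]
  exact mul_inv_cancel_comm _ _


def psi1 (n : ℕ) : H0 n →* H0 n :=
  MonoidHom.mk' (fun p => Multiplicative.ofAdd (p.toAdd.2, p.toAdd.1)) (fun _ _ => rfl)

def psi2 (n : ℕ) : H0 n →* H0 n :=
  MonoidHom.mk' (fun p => Multiplicative.ofAdd (p.toAdd.1 - p.toAdd.2, -p.toAdd.2))
    (fun x y => by
      apply Multiplicative.toAdd.injective
      simp only [toAdd_mul, toAdd_ofAdd, Prod.fst_add, Prod.snd_add, Prod.ext_iff]
      constructor <;> ring)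

lemma psi1_psi1 (n : ℕ) (m : H0 n) : psi1 n (psi1 n m) = m := rfl

lemma psi2_psi2 (n : ℕ) (m : H0 n) : psi2 n (psi2 n m) = m := by
  apply Multiplicative.toAdd.injective
  simp [psi2, Prod.ext_iff]

lemma preserve (n : ℕ) (σ : F2 ≃* F2) (ψ : H0 n →* H0 n)
    (hψ : ∀ m, ψ (ψ m) = m)
    (hcomm : ∀ x : F2, phi n (σ x) = ψ (phi n x)) :
    Subgroup.map σ.toMonoidHom (R n) = R n := by
  ext x
  simp only [Subgroup.mem_map]
  constructor
  · rintro ⟨y, hy, rfl⟩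
    show phi n (σ y) = 1
    rw [hcomm, MonoidHom.mem_ker.mp hy, map_one]
  · intro hx
    refine ⟨σ.symm x, ?_, σ.apply_symm_apply x⟩
    show phi n (σ.symm x) = 1
    have h1 : phi n (σ (σ.symm x)) = ψ (phi n (σ.symm x)) := hcomm _
    rw [σ.apply_symm_apply, MonoidHom.mem_ker.mp hx] at h1
    have := congrArg (ψ) h1
    rw [hψ, map_one] at this
    exact this.symm

lemma comm1 (n : ℕ) (σ₁ : F2 ≃* F2) (hσ₁a : σ₁ a = a * b * a⁻¹) (hσ₁b : σ₁ b = a)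
    (x : F2) : phi n (σ₁ x) = psi1 n (phi n x) := by
  have : (phi n).comp σ₁.toMonoidHom = (psi1 n).comp (phi n) := by
    apply FreeGroup.ext_hom
    intro i
    fin_cases i
    · show phi n (σ₁ a) = psi1 n (phi n a)
      rw [hσ₁a]
      simp only [map_mul, map_inv, phi_a, phi_b, psi1, MonoidHom.mk'_apply]
      apply Multiplicative.toAdd.injective
      simp [Prod.ext_iff]
    · show phi n (σ₁ b) = psi1 n (phi n b)
      rw [hσ₁b]
      simp only [phi_a, phi_b, psi1, MonoidHom.mk'_apply]
      apply Multiplicative.toAdd.injective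
      simp [Prod.ext_iff]
  exact DFunLike.congr_fun this x

lemma comm2 (n : ℕ) (σ₂ : F2 ≃* F2) (hσ₂a : σ₂ a = a) (hσ₂b : σ₂ b = a⁻¹ * b⁻¹)
    (x : F2) : phi n (σ₂ x) = psi2 n (phi n x) := by
  have : (phi n).comp σ₂.toMonoidHom = (psi2 n).comp (phi n) := by
    apply FreeGroup.ext_hom
    intro i
    fin_cases i
    · show phi n (σ₂ a) = psi2 n (phi n a)
      rw [hσ₂a]
      simp only [phi_a, psi2, MonoidHom.mk'_apply]
      apply Multiplicative.toAdd.injective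
      simp [Prod.ext_iff]
    · show phi n (σ₂ b) = psi2 n (phi n b)
      rw [hσ₂b]
      simp only [map_mul, map_inv, phi_a, phi_b, psi2, MonoidHom.mk'_apply]
      apply Multiplicative.toAdd.injective
      simp [Prod.ext_iff]
  exact DFunLike.congr_fun this x

/-- let `σ₁, σ₂` be the automorphisms of `F₂` with `σ₁(a) = aba⁻¹`,
`σ₁(b) = a`, `σ₂(a) = a`, `σ₂(b) = a⁻¹b⁻¹`.  Both preserve `R`, and the induced
endomorphisms `τ₁, τ₂` of `R^{ab}` (characterized by `τ([x]) = [σ(x)]`) satisfy the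
stated formulas, where `(αⁱβʲ)·[x] = [aⁱbʲ x b⁻ʲa⁻ⁱ]` is the conjugation action of
`H₀` and `−` is written multiplicatively as inversion in the abelianization. -/
theorem statement9 (n : ℕ) (hn : 2 ≤ n) (σ₁ σ₂ : F2 ≃* F2)
    (hσ₁a : σ₁ a = a * b * a⁻¹) (hσ₁b : σ₁ b = a)
    (hσ₂a : σ₂ a = a) (hσ₂b : σ₂ b = a⁻¹ * b⁻¹) :
    Subgroup.map σ₁.toMonoidHom (R n) = R n ∧
    Subgroup.map σ₂.toMonoidHom (R n) = R n ∧
    (∀ τ₁ : Ab n →* Ab n,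
      (∀ (x : F2) (hx : x ∈ R n) (hx' : σ₁ x ∈ R n), τ₁ (cls n x hx) = cls n (σ₁ x) hx') →
      (∀ i j : ℕ,
        τ₁ (conjCl n (a ^ i * b ^ j) ⁅b, a⁆ (commutator_mem n b a)) =
          (conjCl n (a ^ (j + 1) * b ^ i) ⁅b, a⁆ (commutator_mem n b a))⁻¹) ∧
      (∀ i : ℕ, τ₁ (conjCl n (a ^ i) (b ^ n) (pow_n_mem n b)) =
          conjCl n (b ^ i) (a ^ n) (pow_n_mem n a)) ∧
      (∀ j : ℕ, τ₁ (conjCl n (b ^ j) (a ^ n) (pow_n_mem n a)) =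
          conjCl n (a ^ (j + 1)) (b ^ n) (pow_n_mem n b))) ∧
    (∀ τ₂ : Ab n →* Ab n,
      (∀ (x : F2) (hx : x ∈ R n) (hx' : σ₂ x ∈ R n), τ₂ (cls n x hx) = cls n (σ₂ x) hx') →
      (∀ i j : ℕ,
        τ₂ (conjCl n (a ^ i * b ^ j) ⁅b, a⁆ (commutator_mem n b a)) =
          (conjCl n (a ^ ((i : ℤ) - (j : ℤ)) * b ^ (-(j : ℤ)))
            ⁅b⁻¹, a⁻¹⁆ (commutator_mem n b⁻¹ a⁻¹))⁻¹) ∧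
      (∀ i : ℕ, τ₂ (conjCl n (a ^ i) (b ^ n) (pow_n_mem n b)) =
          (conjCl n (a ^ i) ((b * a) ^ n) (pow_n_mem n (b * a)))⁻¹) ∧
      (∀ j : ℕ, τ₂ (conjCl n (b ^ j) (a ^ n) (pow_n_mem n a)) =
          conjCl n ((b * a) ^ (-(j : ℤ))) (a ^ n) (pow_n_mem n a))) := by
  have hc1 := comm1 n σ₁ hσ₁a hσ₁b
  have hc2 := comm2 n σ₂ hσ₂a hσ₂b
  have hmem1 : ∀ x : F2, x ∈ R n → σ₁ x ∈ R n := fun x hx => by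
    show phi n (σ₁ x) = 1
    rw [hc1, MonoidHom.mem_ker.mp hx, map_one]
  have hmem2 : ∀ x : F2, x ∈ R n → σ₂ x ∈ R n := fun x hx => by
    show phi n (σ₂ x) = 1
    rw [hc2, MonoidHom.mem_ker.mp hx, map_one]
  refine ⟨preserve n σ₁ (psi1 n) (psi1_psi1 n) hc1,
          preserve n σ₂ (psi2 n) (psi2_psi2 n) hc2, ?_, ?_⟩
  · intro τ₁ hτ
    refine ⟨fun i j => ?_, fun i => ?_, fun j => ?_⟩
    · rw [show conjCl n (a ^ i * b ^ j) ⁅b, a⁆ (commutator_mem n b a)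
            = cls n ((a ^ i * b ^ j) * ⁅b, a⁆ * (a ^ i * b ^ j)⁻¹)
                (conj_mem n _ _ (commutator_mem n b a)) from rfl,
          hτ _ _ (hmem1 _ (conj_mem n _ _ (commutator_mem n b a))),
          conjCl_inv n _ _ (commutator_mem n b a) (inv_mem (commutator_mem n b a))]
      have heq : σ₁ ((a ^ i * b ^ j) * ⁅b, a⁆ * (a ^ i * b ^ j)⁻¹)
          = ((a*b*a⁻¹) ^ i * a ^ (j+1)) * ⁅b, a⁆⁻¹ * ((a*b*a⁻¹) ^ i * a ^ (j+1))⁻¹ := by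
        simp only [map_mul, map_inv, map_pow, map_commutatorElement, hσ₁a, hσ₁b,
          commutatorElement_def, pow_succ]
        group
      rw [cls_congr n heq _ (conj_mem n _ _ (inv_mem (commutator_mem n b a)))]
      exact conj_key n _ _ _ (inv_mem (commutator_mem n b a)) (by
        apply Multiplicative.toAdd.injective
        simp only [map_mul, map_pow, map_inv, phi_a, phi_b, toAdd_mul, toAdd_pow,
          toAdd_inv, toAdd_ofAdd, Prod.smul_mk, Prod.mk_add_mk, Prod.neg_mk, Prod.mk.injEq,
          smul_eq_mul, nsmul_eq_mul, zsmul_eq_mul]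
        constructor <;> push_cast <;> ring)
    · rw [show conjCl n (a ^ i) (b ^ n) (pow_n_mem n b)
            = cls n (a ^ i * b ^ n * (a ^ i)⁻¹) (conj_mem n _ _ (pow_n_mem n b)) from rfl,
          hτ _ _ (hmem1 _ (conj_mem n _ _ (pow_n_mem n b)))]
      have heq : σ₁ (a ^ i * b ^ n * (a ^ i)⁻¹)
          = (a*b*a⁻¹) ^ i * a ^ n * ((a*b*a⁻¹) ^ i)⁻¹ := by
        simp only [map_mul, map_inv, map_pow, hσ₁a, hσ₁b]
      rw [cls_congr n heq _ (conj_mem n _ _ (pow_n_mem n a))]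
      exact conj_key n _ _ _ (pow_n_mem n a) (by
        apply Multiplicative.toAdd.injective
        simp only [map_mul, map_pow, map_inv, phi_a, phi_b, toAdd_mul, toAdd_pow,
          toAdd_inv, toAdd_ofAdd, Prod.smul_mk, Prod.mk_add_mk, Prod.neg_mk, Prod.mk.injEq,
          smul_eq_mul, nsmul_eq_mul, zsmul_eq_mul]
        constructor <;> push_cast <;> ring)
    · rw [show conjCl n (b ^ j) (a ^ n) (pow_n_mem n a)
            = cls n (b ^ j * a ^ n * (b ^ j)⁻¹) (conj_mem n _ _ (pow_n_mem n a)) from rfl,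
          hτ _ _ (hmem1 _ (conj_mem n _ _ (pow_n_mem n a)))]
      have heq : σ₁ (b ^ j * a ^ n * (b ^ j)⁻¹)
          = a ^ (j+1) * b ^ n * (a ^ (j+1))⁻¹ := by
        simp only [map_mul, map_inv, map_pow, hσ₁a, hσ₁b, conj_pow, pow_succ]
        group
      exact cls_congr n heq _ (conj_mem n _ _ (pow_n_mem n b))
  · intro τ₂ hτ
    refine ⟨fun i j => ?_, fun i => ?_, fun j => ?_⟩
    · rw [show conjCl n (a ^ i * b ^ j) ⁅b, a⁆ (commutator_mem n b a)
            = cls n ((a ^ i * b ^ j) * ⁅b, a⁆ * (a ^ i * b ^ j)⁻¹)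
                (conj_mem n _ _ (commutator_mem n b a)) from rfl,
          hτ _ _ (hmem2 _ (conj_mem n _ _ (commutator_mem n b a))),
          conjCl_inv n _ _ (commutator_mem n b⁻¹ a⁻¹) (inv_mem (commutator_mem n b⁻¹ a⁻¹))]
      have heq : σ₂ ((a ^ i * b ^ j) * ⁅b, a⁆ * (a ^ i * b ^ j)⁻¹)
          = (a ^ i * (a⁻¹*b⁻¹) ^ j) * ⁅b⁻¹, a⁻¹⁆⁻¹ * (a ^ i * (a⁻¹*b⁻¹) ^ j)⁻¹ := by
        simp only [map_mul, map_inv, map_pow, map_commutatorElement, hσ₂a, hσ₂b,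
          commutatorElement_def]
        group
      rw [cls_congr n heq _ (conj_mem n _ _ (inv_mem (commutator_mem n b⁻¹ a⁻¹)))]
      exact conj_key n _ _ _ (inv_mem (commutator_mem n b⁻¹ a⁻¹)) (by
        apply Multiplicative.toAdd.injective
        simp only [map_mul, map_pow, map_zpow, map_inv, phi_a, phi_b, toAdd_mul,
          toAdd_pow, toAdd_zpow, toAdd_inv, toAdd_ofAdd, Prod.smul_mk, Prod.mk_add_mk,
          Prod.neg_mk, Prod.mk.injEq, smul_eq_mul, nsmul_eq_mul, zsmul_eq_mul]
        constructor <;> push_cast <;> ring)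
    · rw [show conjCl n (a ^ i) (b ^ n) (pow_n_mem n b)
            = cls n (a ^ i * b ^ n * (a ^ i)⁻¹) (conj_mem n _ _ (pow_n_mem n b)) from rfl,
          hτ _ _ (hmem2 _ (conj_mem n _ _ (pow_n_mem n b))),
          conjCl_inv n _ _ (pow_n_mem n (b*a)) (inv_mem (pow_n_mem n (b*a)))]
      have heq : σ₂ (a ^ i * b ^ n * (a ^ i)⁻¹)
          = a ^ i * ((b*a) ^ n)⁻¹ * (a ^ i)⁻¹ := by
        simp only [map_mul, map_inv, map_pow, hσ₂a, hσ₂b, ← mul_inv_rev, ← inv_pow]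
      exact cls_congr n heq _ (conj_mem n _ _ (inv_mem (pow_n_mem n (b*a))))
    · rw [show conjCl n (b ^ j) (a ^ n) (pow_n_mem n a)
            = cls n (b ^ j * a ^ n * (b ^ j)⁻¹) (conj_mem n _ _ (pow_n_mem n a)) from rfl,
          hτ _ _ (hmem2 _ (conj_mem n _ _ (pow_n_mem n a)))]
      have heq : σ₂ (b ^ j * a ^ n * (b ^ j)⁻¹)
          = (b*a) ^ (-(j:ℤ)) * a ^ n * ((b*a) ^ (-(j:ℤ)))⁻¹ := by
        simp only [map_mul, map_inv, map_pow, hσ₂a, hσ₂b, zpow_neg, zpow_natCast,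
          ← inv_pow, mul_inv_rev]
      exact cls_congr n heq _ (conj_mem n _ _ (pow_n_mem n a))

end Fermat
end

section
/- The group R_{k,s−1} is free, freely generated by the union of the following sets (indexed by multi-indices 𝐢 = (i₁,…,i_{s−1}) with 0 ≤ i_j ≤ k−1): A = { (x_{s−1}^k)^(x₁^{i₁}⋯x_{s−2}^{i_{s−2}}) }, and for each ν with 1 ≤ ν ≤ s−2: B_ν = { [x_{ν+1,s−1}^𝐢 , x_ν]^(x_{1,ν}^𝐢) : 0 ≤ i_ν ≤ k−2 and (i_{ν+1},…,i_{s−1}) ≠ (0,…,0) } and B'_ν = { ( x_ν^k · [x_ν^{−1}, x_{ν+1,s−1}^𝐢] )^(x_{1,ν−1}^𝐢) }. The cardinalities are #A = k^{s−2}, #B_ν = (k−1)·k^{ν−1}·(k^{s−1−ν} − 1), #B'_ν = k^{s−2}. -/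
namespace GenFermat

open scoped commutatorElement

/-- The free group `F_{s-1}` on `s-1` generators `x₁, …, x_{s-1}`
(indexed in Lean by `Fin (s-1)`, so that the mathematical generator `x_m` is
`FreeGroup.of ⟨m-1, _⟩`). -/
abbrev FG (s : ℕ) : Type := FreeGroup (Fin (s - 1))

/-- The generator `x_{t+1}` (Lean index `t : ℕ`, `t < s-1`); junk value `1` otherwise. -/
def x (s : ℕ) (t : ℕ) : FG s := if h : t < s - 1 then FreeGroup.of ⟨t, h⟩ else 1

/-- The group `(ℤ/kℤ)^{s-1}`, written multiplicatively. -/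
abbrev HG (s k : ℕ) : Type := Multiplicative (Fin (s - 1) → ZMod k)

/-- The homomorphism `φ : F_{s-1} → (ℤ/kℤ)^{s-1}` sending `x_j` to the `j`-th standard
generator. -/
def phi (s k : ℕ) : FG s →* HG s k :=
  FreeGroup.lift fun j => Multiplicative.ofAdd (Pi.single j 1)

/-- `R_{k,s-1} = ker φ`, the fundamental group of the open generalized Fermat curve of
type `(k, s-1)`. -/
abbrev R (s k : ℕ) : Subgroup (FG s) := (phi s k).ker

theorem pow_k_mem (s k : ℕ) (g : FG s) : g ^ k ∈ R s k := by
  rw [MonoidHom.mem_ker, map_pow]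
  have h : k • Multiplicative.toAdd (phi s k g) = 0 := by
    funext t
    simp [ZMod.natCast_self]
  calc (phi s k g) ^ k
      = Multiplicative.ofAdd (k • Multiplicative.toAdd (phi s k g)) := by
        rw [ofAdd_nsmul, ofAdd_toAdd]
    _ = 1 := by rw [h]; rfl

theorem commutator_mem (s k : ℕ) (g h : FG s) : ⁅g, h⁆ ∈ R s k := by
  rw [MonoidHom.mem_ker, map_commutatorElement, commutatorElement_eq_one_iff_commute]
  exact Commute.all _ _

theorem conj_mem (s k : ℕ) (g w : FG s) (hw : w ∈ R s k) : g * w * g⁻¹ ∈ R s k :=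
  Subgroup.Normal.conj_mem inferInstance w hw g

/-- The ordered product `x_{lo+1}^{e(lo)} x_{lo+2}^{e(lo+1)} ⋯ x_{hi}^{e(hi-1)}`
(Lean indices in `[lo, hi)`); for a multi-index `𝐢` this realizes the element
`x_{ℓ₁,ℓ₂}^𝐢 = x_{ℓ₁}^{i_{ℓ₁}} ⋯ x_{ℓ₂}^{i_{ℓ₂}}` with `lo = ℓ₁ - 1`, `hi = ℓ₂`
(and equals `1` when `ℓ₁ > ℓ₂`). -/
def segN (s : ℕ) (e : ℕ → ℕ) (lo hi : ℕ) : FG s :=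
  ((List.range' lo (hi - lo)).map fun t => x s t ^ e t).prod

/-- The exponent function of a multi-index `𝐢 : Fin (s-1) → Fin k`. -/
def eI (s k : ℕ) (I : Fin (s - 1) → Fin k) : ℕ → ℕ :=
  fun t => if h : t < s - 1 then (I ⟨t, h⟩ : ℕ) else 0

/-- The abelianization `R^{ab} = R_{k,s-1}/R_{k,s-1}'`. -/
abbrev Ab (s k : ℕ) : Type := Abelianization ↥(R s k)

/-- The class `[w] ∈ R^{ab}` of an element `w ∈ R_{k,s-1}`. -/
def cls (s k : ℕ) (w : FG s) (hw : w ∈ R s k) : Ab s k := Abelianization.of ⟨w, hw⟩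

/-- The class `[g w g⁻¹] ∈ R^{ab}`; for `h = φ(g) ∈ H` this is the value `h·[w]` of the
conjugation action of `H = (ℤ/kℤ)^{s-1}` on `R^{ab}`. -/
def conjCl (s k : ℕ) (g w : FG s) (hw : w ∈ R s k) : Ab s k :=
  cls s k (g * w * g⁻¹) (conj_mem s k g w hw)

/-- The inclusion `Fin (s-2) → Fin (s-1)`. -/
def cast2 (s : ℕ) : Fin (s - 2) → Fin (s - 1) :=
  Fin.castLE (Nat.sub_le_sub_left one_le_two s)


/-- Index set of the family `A`: multi-indices `(i₁,…,i_{s-2})` (all in `[0,k-1]`). -/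
abbrev idxA (s k : ℕ) : Type := Fin (s - 2) → Fin k

/-- Index set of the family `B_ν` (Lean `ν : Fin (s-2)` is the mathematical `ν+1`):
multi-indices `𝐢` with `0 ≤ i_ν ≤ k-2` and `(i_{ν+1},…,i_{s-1}) ≠ (0,…,0)`. -/
abbrev idxB (s k : ℕ) (ν : Fin (s - 2)) : Type :=
  {I : Fin (s - 1) → Fin k //
    (I (cast2 s ν) : ℕ) ≤ k - 2 ∧ ∃ t : Fin (s - 1), (ν : ℕ) < (t : ℕ) ∧ (I t : ℕ) ≠ 0}

/-- Index set of the family `B'_ν`: multi-indices `𝐢`, on which the element does not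
depend on the coordinate `i_ν` (normalized here to `0`). -/
abbrev idxB' (s k : ℕ) (ν : Fin (s - 2)) : Type :=
  {I : Fin (s - 1) → Fin k // (I (cast2 s ν) : ℕ) = 0}

/-- The total index set `A ⊔ (⨆_ν B_ν ⊔ B'_ν)`. -/
abbrev genIdx (s k : ℕ) : Type :=
  idxA s k ⊕ (Σ ν : Fin (s - 2), idxB s k ν ⊕ idxB' s k ν)

/-- The exponent function of `(i₁,…,i_{s-2})`. -/
def eA (s k : ℕ) (J : Fin (s - 2) → Fin k) : ℕ → ℕ :=
  fun t => if h : t < s - 2 then (J ⟨t, h⟩ : ℕ) else 0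

/-- The generators of `R_{k,s-1}`:
`A = {(x_{s-1}^k)^(x₁^{i₁}⋯x_{s-2}^{i_{s-2}})}`,
`B_ν = {[x_{ν+1,s-1}^𝐢, x_ν]^(x_{1,ν}^𝐢)}` (with `0 ≤ i_ν ≤ k-2`, tail `≠ 0`), and
`B'_ν = {(x_ν^k·[x_ν⁻¹, x_{ν+1,s-1}^𝐢])^(x_{1,ν-1}^𝐢)}`, where `x^y = y x y⁻¹` and
`[x,y] = x y x⁻¹ y⁻¹`.  (Lean index `ν : Fin (s-2)` is the mathematical index `ν+1`,
and Lean segment bounds are shifted by one: `x_{ℓ₁,ℓ₂}^𝐢 = segN _ _ (ℓ₁-1) ℓ₂`.) -/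
def gens (s k : ℕ) : genIdx s k → FG s
  | Sum.inl J =>
      segN s (eA s k J) 0 (s - 2) * (x s (s - 2)) ^ k * (segN s (eA s k J) 0 (s - 2))⁻¹
  | Sum.inr ⟨ν, Sum.inl ⟨I, _⟩⟩ =>
      segN s (eI s k I) 0 ((ν : ℕ) + 1) *
        ⁅segN s (eI s k I) ((ν : ℕ) + 1) (s - 1), x s (ν : ℕ)⁆ *
        (segN s (eI s k I) 0 ((ν : ℕ) + 1))⁻¹
  | Sum.inr ⟨ν, Sum.inr ⟨I, _⟩⟩ =>
      segN s (eI s k I) 0 (ν : ℕ) *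
        ((x s (ν : ℕ)) ^ k * ⁅(x s (ν : ℕ))⁻¹, segN s (eI s k I) ((ν : ℕ) + 1) (s - 1)⁆) *
        (segN s (eI s k I) 0 (ν : ℕ))⁻¹

section Seg

variable (s : ℕ)

theorem x_val {j : Fin (s-1)} : x s (j : ℕ) = FreeGroup.of j := by
  rw [x, dif_pos j.2]

theorem segN_empty (e : ℕ → ℕ) {lo hi : ℕ} (h : hi ≤ lo) : segN s e lo hi = 1 := by
  simp [segN, Nat.sub_eq_zero_of_le h]

theorem segN_succ (e : ℕ → ℕ) {lo hi : ℕ} (h : lo ≤ hi) :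
    segN s e lo (hi + 1) = segN s e lo hi * x s hi ^ e hi := by
  have h1 : hi + 1 - lo = (hi - lo) + 1 := by omega
  have h2 : lo + 1 * (hi - lo) = hi := by omega
  rw [segN, h1, List.range'_concat, h2, List.map_append, List.prod_append]
  simp [segN]

theorem segN_single (e : ℕ → ℕ) (lo : ℕ) : segN s e lo (lo + 1) = x s lo ^ e lo := by
  rw [segN_succ s e (le_refl lo), segN_empty s e (le_refl lo), one_mul]

theorem segN_split (e : ℕ → ℕ) {lo mid hi : ℕ} (h1 : lo ≤ mid) (h2 : mid ≤ hi) :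
    segN s e lo hi = segN s e lo mid * segN s e mid hi := by
  have h3 : hi - mid + (mid - lo) = hi - lo := by omega
  have h4 : lo + (mid - lo) = mid := by omega
  have h5 := List.range'_append_1 (s := lo) (m := mid - lo) (n := hi - mid)
  rw [h4, Nat.add_comm (mid - lo), h3] at h5
  rw [segN, segN, segN, ← List.prod_append, ← List.map_append, h5]

theorem segN_congr {e e' : ℕ → ℕ} {lo hi : ℕ} (h : ∀ m, lo ≤ m → m < hi → e m = e' m) :
    segN s e lo hi = segN s e' lo hi := by
  unfold segN
  congr 1
  apply List.map_congr_left
  intro m hm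
  rw [List.mem_range'_1] at hm
  rw [h m hm.1 (by omega)]

theorem segN_zero {e : ℕ → ℕ} {lo hi : ℕ} (h : ∀ m, lo ≤ m → m < hi → e m = 0) :
    segN s e lo hi = 1 := by
  rw [segN_congr s (e' := fun _ => 0) h]
  unfold segN
  rw [List.prod_eq_one]
  intro a ha
  simp only [List.mem_map] at ha
  obtain ⟨b, _, rfl⟩ := ha
  exact pow_zero _

end Seg



section Infra

variable (s k : ℕ)

abbrev HH : Type := Fin (s - 1) → ZMod k

/-- Exponent function of the Schreier transversal element attached to `a`. -/
def eH (a : HH s k) : ℕ → ℕ := fun t => if h : t < s - 1 then (a ⟨t, h⟩).val else 0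

/-- The Schreier transversal element `x₁^{a₁} ⋯ x_{s-1}^{a_{s-1}}`. -/
def trv (a : HH s k) : FG s := segN s (eH s k a) 0 (s - 1)

def delta (j : Fin (s - 1)) : HG s k := Multiplicative.ofAdd (Pi.single j 1)

abbrev KG : Type := FreeGroup (HH s k × Fin (s - 1))

def actE (h : HG s k) : (HH s k × Fin (s - 1)) ≃ (HH s k × Fin (s - 1)) :=
  (Equiv.addLeft (Multiplicative.toAdd h)).prodCongr (Equiv.refl _)

def act : HG s k →* MulAut (KG s k) where
  toFun h := FreeGroup.freeGroupCongr (actE s k h)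
  map_one' := by
    show FreeGroup.freeGroupCongr (actE s k 1) = 1
    have : actE s k 1 = Equiv.refl _ := by
      ext p <;> simp [actE]
    rw [this, FreeGroup.freeGroupCongr_refl]
    rfl
  map_mul' h₁ h₂ := by
    show FreeGroup.freeGroupCongr (actE s k (h₁ * h₂)) = _
    have : actE s k (h₁ * h₂) = (actE s k h₂).trans (actE s k h₁) := by
      ext p <;> simp [actE, add_assoc]
    have h2 := FreeGroup.freeGroupCongr_trans (actE s k h₂) (actE s k h₁)
    rw [this, ← h2]
    rfl

theorem act_of (h : HG s k) (c : HH s k) (j : Fin (s - 1)) :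
    act s k h (FreeGroup.of (c, j)) = FreeGroup.of (Multiplicative.toAdd h + c, j) := by
  simp [act, actE]

def Psi : FG s →* KG s k ⋊[act s k] HG s k :=
  FreeGroup.lift fun j => ⟨FreeGroup.of (0, j), delta s k j⟩

theorem Psi_of (j : Fin (s - 1)) : Psi s k (FreeGroup.of j) = ⟨FreeGroup.of (0, j), delta s k j⟩ :=
  FreeGroup.lift_apply_of

theorem phi_of (j : Fin (s - 1)) : phi s k (FreeGroup.of j) = delta s k j :=
  FreeGroup.lift_apply_of

theorem Psi_right (w : FG s) : (Psi s k w).right = phi s k w := by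
  have : SemidirectProduct.rightHom.comp (Psi s k) = phi s k := by
    apply FreeGroup.ext_hom
    intro j
    simp [Psi_of, phi_of, SemidirectProduct.rightHom]
  calc (Psi s k w).right = (SemidirectProduct.rightHom.comp (Psi s k)) w := rfl
    _ = phi s k w := by rw [this]

theorem phi_pow (j : Fin (s - 1)) (r : ℕ) :
    phi s k (FreeGroup.of j ^ r) = Multiplicative.ofAdd (Pi.single j (r : ZMod k)) := by
  rw [map_pow, phi_of]
  rw [show (delta s k j) ^ r = Multiplicative.ofAdd (r • (Pi.single j 1 : Fin (s-1) → ZMod k)) by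
    rw [delta, ← ofAdd_nsmul]]
  congr 1
  rw [← Pi.single_smul, nsmul_eq_mul, mul_one]

section NZ

variable (hk : 0 < k)

def finOf (c : ZMod k) : Fin k :=
  ⟨c.val, by haveI : NeZero k := ⟨hk.ne'⟩; exact ZMod.val_lt c⟩

def recover (a : HH s k) : Fin (s - 1) → Fin k := fun t => finOf k hk (a t)

def recoverA (a : HH s k) : Fin (s - 2) → Fin k := fun m => finOf k hk (a (cast2 s m))

end NZ

theorem eH_apply (a : HH s k) (j : Fin (s - 1)) : eH s k a (j : ℕ) = (a j).val := by
  simp [eH]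

theorem trv_split (a : HH s k) (j : Fin (s - 1)) :
    trv s k a = segN s (eH s k a) 0 (j : ℕ) * x s (j : ℕ) ^ (a j).val *
      segN s (eH s k a) ((j : ℕ) + 1) (s - 1) := by
  rw [trv, segN_split s (eH s k a) (Nat.zero_le _) (le_of_lt j.2),
    segN_split s (eH s k a) (Nat.le_succ _) j.2, segN_single, eH_apply, mul_assoc]

end Infra

section Key

variable (s k : ℕ)

/-- `Pi.single j 1` as an element of `HH`. -/
def sing (j : Fin (s - 1)) : HH s k := Pi.single j (1 : ZMod k)

theorem zmod_val_add_one {c : ZMod k} (h : c.val + 1 < k) : (c + 1).val = c.val + 1 := by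
  haveI : NeZero k := ⟨by omega⟩
  rw [show c + 1 = (((c.val + 1 : ℕ)) : ZMod k) by push_cast [ZMod.natCast_zmod_val]; ring]
  exact ZMod.val_cast_of_lt h

theorem zmod_add_one_zero (hk : 0 < k) {c : ZMod k} (h : c.val = k - 1) : c + 1 = 0 := by
  haveI : NeZero k := ⟨by omega⟩
  rw [show c = (((k - 1 : ℕ)) : ZMod k) by rw [← h, ZMod.natCast_zmod_val]]
  rw [show ((k - 1 : ℕ) : ZMod k) + 1 = ((k : ℕ) : ZMod k) by push_cast [Nat.cast_sub hk]; ring]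
  exact ZMod.natCast_self k

theorem sing_apply_ne (a : HH s k) (j t : Fin (s - 1)) (h : t ≠ j) :
    (a + sing s k j) t = a t := by
  rw [Pi.add_apply, sing, Pi.single_eq_of_ne h, add_zero]

theorem sing_apply_eq (a : HH s k) (j : Fin (s - 1)) :
    (a + sing s k j) j = a j + 1 := by
  rw [Pi.add_apply, sing, Pi.single_eq_same]

theorem keyTriv (hk : 2 ≤ k) (a : HH s k) (j : Fin (s - 1)) (h1 : (a j).val ≠ k - 1)
    (h2 : ∀ t : Fin (s - 1), (j : ℕ) < (t : ℕ) → a t = 0) :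
    trv s k a * FreeGroup.of j = trv s k (a + sing s k j) := by
  haveI : NeZero k := ⟨by omega⟩
  have hv : (a j).val < k := ZMod.val_lt _
  have hv2 : (a j).val + 1 < k := by omega
  have e1 : segN s (eH s k (a + sing s k j)) 0 (j : ℕ) = segN s (eH s k a) 0 (j : ℕ) := by
    apply segN_congr
    intro m _ hm2
    have hm3 : m < s - 1 := lt_trans hm2 j.2
    simp only [eH, dif_pos hm3]
    rw [sing_apply_ne s k a j ⟨m, hm3⟩ (by intro hc; rw [Fin.ext_iff] at hc; simp at hc; omega)]
  have e2 : segN s (eH s k a) ((j : ℕ) + 1) (s - 1) = 1 := by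
    apply segN_zero
    intro m hm1 hm2
    simp only [eH, dif_pos hm2]
    rw [h2 ⟨m, hm2⟩ (by simp only [Fin.val_mk]; omega), ZMod.val_zero]
  have e3 : segN s (eH s k (a + sing s k j)) ((j : ℕ) + 1) (s - 1) = 1 := by
    apply segN_zero
    intro m hm1 hm2
    simp only [eH, dif_pos hm2]
    rw [sing_apply_ne s k a j ⟨m, hm2⟩ (by intro hc; rw [Fin.ext_iff] at hc; simp at hc; omega),
      h2 ⟨m, hm2⟩ (by simp only [Fin.val_mk]; omega), ZMod.val_zero]
  rw [trv_split s k a j, trv_split s k (a + sing s k j) j, e1, e2, e3,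
    sing_apply_eq, zmod_val_add_one k hv2, mul_one, mul_one, pow_succ, x_val, mul_assoc]

theorem cast2_val (ν : Fin (s - 2)) : ((cast2 s ν : Fin (s - 1)) : ℕ) = (ν : ℕ) := rfl

theorem recover_val (hk : 0 < k) (a : HH s k) (t : Fin (s - 1)) :
    ((recover s k hk a t : Fin k) : ℕ) = (a t).val := rfl

def mkB (hk : 2 ≤ k) (a : HH s k) (ν : Fin (s - 2))
    (h1 : (a (cast2 s ν)).val ≠ k - 1)
    (h2 : ∃ t : Fin (s - 1), (ν : ℕ) < (t : ℕ) ∧ (a t).val ≠ 0) : idxB s k ν :=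
  ⟨recover s k (by omega) a, by
    haveI : NeZero k := ⟨by omega⟩
    refine ⟨?_, ?_⟩
    · have hv := ZMod.val_lt (a (cast2 s ν))
      rw [recover_val]
      omega
    · obtain ⟨t, ht1, ht2⟩ := h2
      exact ⟨t, ht1, by rwa [recover_val]⟩⟩

def mkB' (hk : 2 ≤ k) (a : HH s k) (ν : Fin (s - 2)) : idxB' s k ν :=
  ⟨Function.update (recover s k (by omega) a) (cast2 s ν) ⟨0, by omega⟩, by
    rw [Function.update_self]⟩

theorem eI_eq_eH (hk : 2 ≤ k) (a : HH s k) :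
    eI s k (recover s k (by omega : 0 < k) a) = eH s k a := by
  funext m
  simp only [eI, eH]
  split
  · rfl
  · rfl

theorem keyA (hs : 3 ≤ s) (hk : 2 ≤ k) (a : HH s k) (j : Fin (s - 1)) (hj : (j : ℕ) = s - 2)
    (h1 : (a j).val = k - 1) :
    gens s k (Sum.inl (recoverA s k (by omega) a)) =
      trv s k a * FreeGroup.of j * (trv s k (a + sing s k j))⁻¹ := by
  haveI : NeZero k := ⟨by omega⟩
  have hk1 : k - 1 + 1 = k := by omega
  have hj2 : s - 1 ≤ (j : ℕ) + 1 := by omega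
  have hgens : gens s k (Sum.inl (recoverA s k (by omega) a)) =
      segN s (eA s k (recoverA s k (by omega) a)) 0 (s - 2) * (x s (s - 2)) ^ k *
      (segN s (eA s k (recoverA s k (by omega) a)) 0 (s - 2))⁻¹ := rfl
  have hhead : segN s (eA s k (recoverA s k (by omega : (0:ℕ) < k) a)) 0 (s - 2) =
      segN s (eH s k a) 0 (s - 2) := by
    apply segN_congr
    intro m _ hm2
    have hm3 : m < s - 1 := by omega
    have hc : cast2 s ⟨m, hm2⟩ = (⟨m, hm3⟩ : Fin (s - 1)) := by
      apply Fin.ext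
      simp [cast2]
    simp only [eA, eH, dif_pos hm2, dif_pos hm3, recoverA, finOf, hc]
  have hhead' : segN s (eH s k (a + sing s k j)) 0 (s - 2) = segN s (eH s k a) 0 (s - 2) := by
    apply segN_congr
    intro m _ hm2
    have hm3 : m < s - 1 := by omega
    simp only [eH, dif_pos hm3]
    rw [sing_apply_ne s k a j ⟨m, hm3⟩ (by
      intro hc
      rw [Fin.ext_iff] at hc
      simp only [Fin.val_mk] at hc
      omega)]
  have hpow : (x s (s - 2)) ^ k = (x s (s - 2)) ^ (k - 1) * x s (s - 2) := by
    conv_lhs => rw [← hk1]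
    rw [pow_succ]
  rw [hgens, hhead, trv_split s k a j, trv_split s k (a + sing s k j) j, ← x_val s (j := j), hj,
    segN_empty s (eH s k a) (by omega : s - 1 ≤ s - 2 + 1),
    segN_empty s (eH s k (a + sing s k j)) (by omega : s - 1 ≤ s - 2 + 1), hhead', h1,
    sing_apply_eq, zmod_add_one_zero k (by omega) h1, ZMod.val_zero, hpow]
  group

theorem keyB (hs : 3 ≤ s) (hk : 2 ≤ k) (a : HH s k) (ν : Fin (s - 2))
    (h1 : (a (cast2 s ν)).val ≠ k - 1)
    (h2 : ∃ t : Fin (s - 1), (ν : ℕ) < (t : ℕ) ∧ (a t).val ≠ 0) :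
    gens s k (Sum.inr ⟨ν, Sum.inl (mkB s k hk a ν h1 h2)⟩) =
      trv s k a * FreeGroup.of (cast2 s ν) *
        (trv s k (a + sing s k (cast2 s ν)))⁻¹ := by
  haveI : NeZero k := ⟨by omega⟩
  set j : Fin (s - 1) := cast2 s ν with hjdef
  have hjv : (j : ℕ) = (ν : ℕ) := rfl
  have hv : (a j).val < k := ZMod.val_lt _
  have hv2 : (a j).val + 1 < k := by omega
  have hgens : gens s k (Sum.inr ⟨ν, Sum.inl (mkB s k hk a ν h1 h2)⟩) =
      segN s (eH s k a) 0 ((j : ℕ) + 1) *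
        ⁅segN s (eH s k a) ((j : ℕ) + 1) (s - 1), x s (j : ℕ)⁆ *
        (segN s (eH s k a) 0 ((j : ℕ) + 1))⁻¹ := by
    show segN s (eI s k (recover s k _ a)) 0 ((ν : ℕ) + 1) *
        ⁅segN s (eI s k (recover s k _ a)) ((ν : ℕ) + 1) (s - 1), x s (ν : ℕ)⁆ *
        (segN s (eI s k (recover s k _ a)) 0 ((ν : ℕ) + 1))⁻¹ = _
    rw [eI_eq_eH s k hk a]
    rfl
  have hsplit : segN s (eH s k a) 0 ((j : ℕ) + 1) =
      segN s (eH s k a) 0 (j : ℕ) * x s (j : ℕ) ^ (a j).val := by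
    rw [segN_split s (eH s k a) (Nat.zero_le (j : ℕ)) (Nat.le_succ _), segN_single, eH_apply]
  have hhead' : segN s (eH s k (a + sing s k j)) 0 (j : ℕ) = segN s (eH s k a) 0 (j : ℕ) := by
    apply segN_congr
    intro m _ hm2
    have hm3 : m < s - 1 := by omega
    simp only [eH, dif_pos hm3]
    rw [sing_apply_ne s k a j ⟨m, hm3⟩ (by
      intro hc
      rw [Fin.ext_iff] at hc
      simp only [Fin.val_mk, hjv] at hc
      omega)]
  have htail' : segN s (eH s k (a + sing s k j)) ((j : ℕ) + 1) (s - 1) =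
      segN s (eH s k a) ((j : ℕ) + 1) (s - 1) := by
    apply segN_congr
    intro m hm1 hm2
    simp only [eH, dif_pos hm2]
    rw [sing_apply_ne s k a j ⟨m, hm2⟩ (by
      intro hc
      rw [Fin.ext_iff] at hc
      simp only [Fin.val_mk, hjv] at hc
      omega)]
  rw [hgens, hsplit, trv_split s k a j, trv_split s k (a + sing s k j) j, hhead', htail',
    sing_apply_eq, zmod_val_add_one k hv2, ← x_val s (j := j),
    commutatorElement_def, pow_succ]
  group

theorem keyB' (hs : 3 ≤ s) (hk : 2 ≤ k) (a : HH s k) (ν : Fin (s - 2))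
    (h1 : (a (cast2 s ν)).val = k - 1) :
    gens s k (Sum.inr ⟨ν, Sum.inr (mkB' s k hk a ν)⟩) =
      trv s k a * FreeGroup.of (cast2 s ν) *
        (trv s k (a + sing s k (cast2 s ν)))⁻¹ := by
  haveI : NeZero k := ⟨by omega⟩
  set j : Fin (s - 1) := cast2 s ν with hjdef
  have hjv : (j : ℕ) = (ν : ℕ) := rfl
  have hk1 : k - 1 + 1 = k := by omega
  have hIH : ∀ m, m < s - 1 → m ≠ (ν : ℕ) →
      eI s k (Function.update (recover s k (by omega : (0:ℕ) < k) a) (cast2 s ν) ⟨0, by omega⟩) m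
        = eH s k a m := by
    intro m hm hne
    simp only [eI, eH, dif_pos hm]
    rw [Function.update_of_ne (by
      intro hc
      rw [Fin.ext_iff] at hc
      simp only [Fin.val_mk] at hc
      exact hne hc) _ _]
    rfl
  have hgens : gens s k (Sum.inr ⟨ν, Sum.inr (mkB' s k hk a ν)⟩) =
      segN s (eH s k a) 0 (j : ℕ) *
        ((x s (j : ℕ)) ^ k * ⁅(x s (j : ℕ))⁻¹, segN s (eH s k a) ((j : ℕ) + 1) (s - 1)⁆) *
        (segN s (eH s k a) 0 (j : ℕ))⁻¹ := by
    show segN s (eI s k _) 0 (ν : ℕ) *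
        ((x s (ν : ℕ)) ^ k * ⁅(x s (ν : ℕ))⁻¹, segN s (eI s k _) ((ν : ℕ) + 1) (s - 1)⁆) *
        (segN s (eI s k _) 0 (ν : ℕ))⁻¹ = _
    rw [segN_congr s (fun m hm1 hm2 => hIH m (by omega) (by omega)),
      segN_congr s (e' := eH s k a) (lo := (ν : ℕ) + 1) (hi := s - 1) (fun m hm1 hm2 => hIH m (by omega) (by omega))]
    rfl
  have hhead' : segN s (eH s k (a + sing s k j)) 0 (j : ℕ) = segN s (eH s k a) 0 (j : ℕ) := by
    apply segN_congr
    intro m _ hm2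
    have hm3 : m < s - 1 := by omega
    simp only [eH, dif_pos hm3]
    rw [sing_apply_ne s k a j ⟨m, hm3⟩ (by
      intro hc
      rw [Fin.ext_iff] at hc
      simp only [Fin.val_mk, hjv] at hc
      omega)]
  have htail' : segN s (eH s k (a + sing s k j)) ((j : ℕ) + 1) (s - 1) =
      segN s (eH s k a) ((j : ℕ) + 1) (s - 1) := by
    apply segN_congr
    intro m hm1 hm2
    simp only [eH, dif_pos hm2]
    rw [sing_apply_ne s k a j ⟨m, hm2⟩ (by
      intro hc
      rw [Fin.ext_iff] at hc
      simp only [Fin.val_mk, hjv] at hc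
      omega)]
  have hpow : (x s (j : ℕ)) ^ k = (x s (j : ℕ)) ^ (k - 1) * x s (j : ℕ) := by
    conv_lhs => rw [← hk1]
    rw [pow_succ]
  rw [hgens, trv_split s k a j, trv_split s k (a + sing s k j) j, hhead', htail',
    sing_apply_eq, zmod_add_one_zero k (by omega) h1, ZMod.val_zero, h1,
    commutatorElement_def, hpow, ← x_val s (j := j)]
  group

/-- The rewriting map on Schreier letters. -/
def Bmap (hk : 2 ≤ k) (a : HH s k) (j : Fin (s - 1)) : FreeGroup (genIdx s k) :=
  if hj : (j : ℕ) < s - 2 then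
    if h1 : (a j).val = k - 1 then
      FreeGroup.of (Sum.inr ⟨⟨(j : ℕ), hj⟩, Sum.inr (mkB' s k hk a ⟨(j : ℕ), hj⟩)⟩)
    else if h2 : ∃ t : Fin (s - 1), ((j : ℕ) < (t : ℕ)) ∧ (a t).val ≠ 0 then
      FreeGroup.of (Sum.inr ⟨⟨(j : ℕ), hj⟩, Sum.inl (mkB s k hk a ⟨(j : ℕ), hj⟩ h1 h2)⟩)
    else 1
  else
    if h1 : (a j).val = k - 1 then FreeGroup.of (Sum.inl (recoverA s k (by omega) a))
    else 1

def beta (hk : 2 ≤ k) : KG s k →* FreeGroup (genIdx s k) :=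
  FreeGroup.lift (fun p => Bmap s k hk p.1 p.2)

theorem beta_of (hk : 2 ≤ k) (a : HH s k) (j : Fin (s - 1)) :
    beta s k hk (FreeGroup.of (a, j)) = Bmap s k hk a j := FreeGroup.lift_apply_of

theorem Bmap_trivial (hk : 2 ≤ k) (c : HH s k) (j : Fin (s - 1))
    (h1 : (c j).val ≠ k - 1) (h2 : ∀ t : Fin (s - 1), (j : ℕ) < (t : ℕ) → c t = 0) :
    Bmap s k hk c j = 1 := by
  haveI : NeZero k := ⟨by omega⟩
  unfold Bmap
  by_cases hj : (j : ℕ) < s - 2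
  · rw [dif_pos hj, dif_neg h1, dif_neg]
    push_neg
    intro t ht
    rw [h2 t ht, ZMod.val_zero]
  · rw [dif_neg hj, dif_neg h1]

theorem thetaLetter (hs : 3 ≤ s) (hk : 2 ≤ k) (a : HH s k) (j : Fin (s - 1)) :
    FreeGroup.lift (gens s k) (Bmap s k hk a j) =
      trv s k a * FreeGroup.of j * (trv s k (a + sing s k j))⁻¹ := by
  haveI : NeZero k := ⟨by omega⟩
  by_cases hj : (j : ℕ) < s - 2
  · by_cases h1 : (a j).val = k - 1
    · rw [Bmap, dif_pos hj, dif_pos h1, FreeGroup.lift_apply_of]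
      have hcj : cast2 s ⟨(j : ℕ), hj⟩ = j := Fin.ext rfl
      have h1' : (a (cast2 s ⟨(j : ℕ), hj⟩)).val = k - 1 := by rw [hcj]; exact h1
      have := keyB' s k hs hk a ⟨(j : ℕ), hj⟩ h1'
      rwa [hcj] at this
    · by_cases h2 : ∃ t : Fin (s - 1), ((j : ℕ) < (t : ℕ)) ∧ (a t).val ≠ 0
      · rw [Bmap, dif_pos hj, dif_neg h1, dif_pos h2, FreeGroup.lift_apply_of]
        have hcj : cast2 s ⟨(j : ℕ), hj⟩ = j := Fin.ext rfl
        have h1' : (a (cast2 s ⟨(j : ℕ), hj⟩)).val ≠ k - 1 := by rw [hcj]; exact h1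
        have := keyB s k hs hk a ⟨(j : ℕ), hj⟩ h1' h2
        rwa [hcj] at this
      · rw [Bmap, dif_pos hj, dif_neg h1, dif_neg h2, map_one]
        push_neg at h2
        rw [← keyTriv s k hk a j h1
          (fun t ht => (ZMod.val_eq_zero (a t)).mp (h2 t ht))]
        group
  · by_cases h1 : (a j).val = k - 1
    · rw [Bmap, dif_neg hj, dif_pos h1, FreeGroup.lift_apply_of]
      exact keyA s k hs hk a j (by have := j.2; omega) h1
    · rw [Bmap, dif_neg hj, dif_neg h1, map_one]
      rw [← keyTriv s k hk a j h1
        (fun t ht => absurd ht (by have h2 := t.2; have h3 := j.2; omega))]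
      group

theorem act_act (g h : HG s k) (y : KG s k) :
    act s k g (act s k h y) = act s k (g * h) y := by
  rw [map_mul]
  rfl

theorem act_one_apply (y : KG s k) : act s k 1 y = y := by
  rw [map_one]
  rfl

theorem Psi_left_of (j : Fin (s - 1)) : (Psi s k (FreeGroup.of j)).left = FreeGroup.of (0, j) := by
  rw [Psi_of]

def trunc (a : HH s k) (m : ℕ) : HH s k := fun t => if (t : ℕ) < m then a t else 0

theorem trunc_last (a : HH s k) : trunc s k a (s - 1) = a := by
  funext t
  rw [trunc, if_pos t.2]

theorem trunc_zero (a : HH s k) : trunc s k a 0 = 0 := by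
  funext t
  rw [trunc, if_neg (by omega)]
  rfl

theorem ofAdd_mul_delta (a : HH s k) (j : Fin (s - 1)) :
    Multiplicative.ofAdd a * delta s k j = Multiplicative.ofAdd (a + sing s k j) := rfl

theorem beta_pow (hk : 2 ≤ k) (c : HH s k) (j : Fin (s - 1)) (hcj : c j = 0)
    (hc : ∀ t : Fin (s - 1), (j : ℕ) < (t : ℕ) → c t = 0) :
    ∀ r : ℕ, r ≤ k - 1 →
      beta s k hk (act s k (Multiplicative.ofAdd c) ((Psi s k (FreeGroup.of j ^ r)).left)) = 1 := by
  haveI : NeZero k := ⟨by omega⟩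
  intro r
  induction r with
  | zero =>
    intro _
    rw [pow_zero, map_one, SemidirectProduct.one_left, map_one, map_one]
  | succ r ih =>
    intro hr
    rw [pow_succ, map_mul, SemidirectProduct.mul_left, map_mul, map_mul,
      ih (by omega), one_mul, Psi_right, phi_pow, Psi_left_of, act_act, ← ofAdd_add, act_of]
    rw [toAdd_ofAdd, add_zero, beta_of]
    apply Bmap_trivial
    · rw [Pi.add_apply, hcj, Pi.single_eq_same, zero_add, ZMod.val_cast_of_lt (by omega)]
      omega
    · intro t ht
      rw [Pi.add_apply, hc t ht, Pi.single_eq_of_ne (by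
        intro he
        rw [Fin.ext_iff] at he
        omega), zero_add]

theorem beta_seg (hk : 2 ≤ k) (a : HH s k) :
    ∀ m, m ≤ s - 1 →
      phi s k (segN s (eH s k a) 0 m) = Multiplicative.ofAdd (trunc s k a m) ∧
      beta s k hk ((Psi s k (segN s (eH s k a) 0 m)).left) = 1 := by
  haveI : NeZero k := ⟨by omega⟩
  intro m
  induction m with
  | zero =>
    intro _
    rw [segN_empty s _ (le_refl 0), trunc_zero, map_one, map_one, SemidirectProduct.one_left,
      map_one]
    exact ⟨rfl, rfl⟩
  | succ m ih =>
    intro hm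
    have hm1 : m < s - 1 := by omega
    obtain ⟨ih1, ih2⟩ := ih (by omega)
    set jm : Fin (s - 1) := ⟨m, hm1⟩ with hjm
    have hseg : segN s (eH s k a) 0 (m + 1) =
        segN s (eH s k a) 0 m * FreeGroup.of jm ^ (a jm).val := by
      rw [segN_succ s _ (Nat.zero_le m)]
      congr 1
      rw [show eH s k a m = (a jm).val by simp [eH, hm1, hjm]]
      rw [show x s m = FreeGroup.of jm from by rw [← x_val s (j := jm)]]
    have htr : (trunc s k a m) + Pi.single jm (((a jm).val : ℕ) : ZMod k) = trunc s k a (m + 1) := by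
      funext t
      rw [ZMod.natCast_zmod_val]
      by_cases h1 : (t : ℕ) < m
      · rw [Pi.add_apply, trunc, trunc, if_pos h1, if_pos (by omega),
          Pi.single_eq_of_ne (by intro he; rw [Fin.ext_iff] at he; simp [hjm] at he; omega),
          add_zero]
      · by_cases h2 : (t : ℕ) = m
        · have : t = jm := by rw [Fin.ext_iff]; simpa [hjm]
          rw [this, Pi.add_apply, trunc, trunc, if_neg (by simp [hjm]), if_pos (by simp [hjm]),
            Pi.single_eq_same, zero_add]
        · rw [Pi.add_apply, trunc, trunc, if_neg (by omega), if_neg (by omega),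
            Pi.single_eq_of_ne (by intro he; rw [Fin.ext_iff] at he; simp [hjm] at he; omega),
            add_zero]
    constructor
    · rw [hseg, map_mul, ih1, phi_pow, ← ofAdd_add, htr]
    · rw [hseg, map_mul, SemidirectProduct.mul_left, map_mul, ih2, one_mul, Psi_right, ih1]
      apply beta_pow s k hk (trunc s k a m) jm
      · rw [trunc, if_neg (by simp [hjm])]
      · intro t ht
        rw [trunc, if_neg (by simp [hjm] at ht ⊢; omega)]
      · have := ZMod.val_lt (a jm)
        omega

theorem phi_trv (hk : 2 ≤ k) (a : HH s k) :
    phi s k (trv s k a) = Multiplicative.ofAdd a := by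
  have := (beta_seg s k hk a (s - 1) (le_refl _)).1
  rwa [trunc_last] at this

theorem beta_trv (hk : 2 ≤ k) (a : HH s k) :
    beta s k hk ((Psi s k (trv s k a)).left) = 1 :=
  (beta_seg s k hk a (s - 1) (le_refl _)).2

theorem trv_zero (hk : 2 ≤ k) : trv s k 0 = 1 := by
  haveI : NeZero k := ⟨by omega⟩
  apply segN_zero
  intro m _ hm2
  simp [eH, hm2]

theorem betaPsi_schreier (hk : 2 ≤ k) (a : HH s k) (j : Fin (s - 1)) :
    beta s k hk ((Psi s k (trv s k a * FreeGroup.of j * (trv s k (a + sing s k j))⁻¹)).left) =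
      Bmap s k hk a j := by
  haveI : NeZero k := ⟨by omega⟩
  rw [map_mul, map_mul, map_inv, SemidirectProduct.mul_left, SemidirectProduct.mul_left,
    SemidirectProduct.inv_left, SemidirectProduct.mul_right,
    Psi_right, Psi_right, Psi_right, phi_trv s k hk, phi_trv s k hk, phi_of,
    act_act, ofAdd_mul_delta, mul_inv_cancel, act_one_apply,
    map_mul, map_mul, beta_trv s k hk, one_mul, map_inv, beta_trv s k hk, inv_one, mul_one,
    Psi_left_of, act_of, toAdd_ofAdd, add_zero, beta_of]

theorem ofAdd_mul_any (a : HH s k) (h : HG s k) :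
    Multiplicative.ofAdd a * h = Multiplicative.ofAdd (a + Multiplicative.toAdd h) := rfl

theorem toAdd_delta (j : Fin (s - 1)) :
    Multiplicative.toAdd (delta s k j) = sing s k j := rfl

theorem ofAdd_mul_delta_inv (a : HH s k) (j : Fin (s - 1)) :
    Multiplicative.ofAdd a * (delta s k j)⁻¹ = Multiplicative.ofAdd (a - sing s k j) := by
  rw [sub_eq_add_neg]
  rfl

theorem main_crossed (hs : 3 ≤ s) (hk : 2 ≤ k) (w : FG s) :
    ∀ a : HH s k,
      FreeGroup.lift (gens s k)
        (beta s k hk (act s k (Multiplicative.ofAdd a) ((Psi s k w).left))) =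
      trv s k a * w * (trv s k (a + Multiplicative.toAdd (phi s k w)))⁻¹ := by
  induction w using FreeGroup.induction_on with
  | C1 =>
    intro a
    simp only [map_one, SemidirectProduct.one_left, toAdd_one, add_zero, mul_one,
      mul_inv_cancel]
  | of j =>
    intro a
    rw [Psi_left_of, act_of, toAdd_ofAdd, add_zero, beta_of, thetaLetter s k hs hk, phi_of]
    rfl
  | inv_of j _ =>
    intro a
    rw [map_inv, SemidirectProduct.inv_left, Psi_right, phi_of, act_act,
      ofAdd_mul_delta_inv, map_inv, map_inv, map_inv, Psi_left_of, act_of, toAdd_ofAdd,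
      add_zero, beta_of, thetaLetter s k hs hk, map_inv, phi_of, toAdd_inv, toAdd_delta,
      ← sub_eq_add_neg, sub_add_cancel]
    group
  | mul u v ihu ihv =>
    intro a
    rw [map_mul, SemidirectProduct.mul_left, map_mul, map_mul, map_mul, Psi_right, act_act,
      ofAdd_mul_any, ihu a, ihv (a + Multiplicative.toAdd (phi s k u)), map_mul, toAdd_mul,
      ← add_assoc]
    group

theorem beta_gens (hs : 3 ≤ s) (hk : 2 ≤ k) (g : genIdx s k) :
    beta s k hk ((Psi s k (gens s k g)).left) = FreeGroup.of g := by
  haveI : NeZero k := ⟨by omega⟩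
  obtain (J | ⟨ν, (⟨I, hI⟩ | ⟨I, hI⟩)⟩) := g
  · -- family A
    set a : HH s k := fun t =>
      if h : (t : ℕ) < s - 2 then (((J ⟨(t : ℕ), h⟩ : Fin k) : ℕ) : ZMod k)
      else (((k - 1 : ℕ)) : ZMod k) with ha
    have hsl : s - 2 < s - 1 := by omega
    set j : Fin (s - 1) := ⟨s - 2, hsl⟩ with hj
    have hval : (a j).val = k - 1 := by
      rw [ha]
      simp only [hj, dif_neg (lt_irrefl (s - 2))]
      exact ZMod.val_cast_of_lt (by omega)
    have hrec : recoverA s k (by omega : (0:ℕ) < k) a = J := by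
      funext m
      have hm2 : ((cast2 s m : Fin (s - 1)) : ℕ) < s - 2 := m.2
      apply Fin.ext
      show (a (cast2 s m)).val = ((J m : Fin k) : ℕ)
      rw [ha]
      simp only [dif_pos hm2]
      rw [show (⟨((cast2 s m : Fin (s - 1)) : ℕ), hm2⟩ : Fin (s - 2)) = m from Fin.ext rfl]
      exact ZMod.val_cast_of_lt (J m).2
    have hkey := keyA s k hs hk a j rfl hval
    rw [hrec] at hkey
    rw [hkey, betaPsi_schreier s k hk a j, Bmap, dif_neg (by simp [hj]), dif_pos hval, hrec]
  · -- family B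
    set a : HH s k := fun t => (((I t : Fin k) : ℕ) : ZMod k) with ha
    have hval : ∀ t, (a t).val = ((I t : Fin k) : ℕ) := fun t =>
      ZMod.val_cast_of_lt (I t).2
    have h1 : (a (cast2 s ν)).val ≠ k - 1 := by
      rw [hval]
      have := hI.1
      omega
    have h2 : ∃ t : Fin (s - 1), ((ν : ℕ) < (t : ℕ)) ∧ (a t).val ≠ 0 := by
      obtain ⟨t, ht1, ht2⟩ := hI.2
      exact ⟨t, ht1, by rw [hval]; exact ht2⟩
    have hmk : mkB s k hk a ν h1 h2 = ⟨I, hI⟩ := by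
      apply Subtype.ext
      funext t
      exact Fin.ext (hval t)
    have hkey := keyB s k hs hk a ν h1 h2
    rw [hmk] at hkey
    rw [hkey, betaPsi_schreier s k hk a (cast2 s ν)]
    have hj2 : ((cast2 s ν : Fin (s - 1)) : ℕ) < s - 2 := ν.2
    have h2' : (∃ t : Fin (s - 1), ((cast2 s ν : Fin (s - 1)) : ℕ) < (t : ℕ) ∧ (a t).val ≠ 0) := h2
    rw [Bmap, dif_pos hj2, dif_neg h1, dif_pos h2']
    show FreeGroup.of ((Sum.inr ⟨ν, Sum.inl (mkB s k hk a ν h1 h2')⟩ : genIdx s k)) = _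
    rw [show mkB s k hk a ν h1 h2' = ⟨I, hI⟩ from
      Subtype.ext (funext fun t => Fin.ext (hval t))]
  · -- family B'
    set a : HH s k := fun t =>
      if t = cast2 s ν then (((k - 1 : ℕ)) : ZMod k) else (((I t : Fin k) : ℕ) : ZMod k) with ha
    have h1 : (a (cast2 s ν)).val = k - 1 := by
      rw [ha]
      simp only [if_pos rfl]
      exact ZMod.val_cast_of_lt (by omega)
    have hmk : mkB' s k hk a ν = ⟨I, hI⟩ := by
      apply Subtype.ext
      funext t
      by_cases ht : t = cast2 s ν
      · subst ht
        show Function.update (recover s k (by omega) a) (cast2 s ν) ⟨0, by omega⟩ (cast2 s ν)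
          = I (cast2 s ν)
        rw [Function.update_self]
        apply Fin.ext
        simp only [Fin.val_mk]
        omega
      · show Function.update (recover s k (by omega) a) (cast2 s ν) ⟨0, by omega⟩ t = I t
        rw [Function.update_of_ne ht]
        apply Fin.ext
        show (a t).val = _
        rw [ha]
        simp only [if_neg ht]
        exact ZMod.val_cast_of_lt (I t).2
    have hkey := keyB' s k hs hk a ν h1
    rw [hmk] at hkey
    rw [hkey, betaPsi_schreier s k hk a (cast2 s ν)]
    have hj2 : ((cast2 s ν : Fin (s - 1)) : ℕ) < s - 2 := ν.2
    rw [Bmap, dif_pos hj2, dif_pos h1]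
    show FreeGroup.of ((Sum.inr ⟨ν, Sum.inr (mkB' s k hk a ν)⟩ : genIdx s k)) = _
    rw [hmk]

theorem gens_mem (g : genIdx s k) : gens s k g ∈ R s k := by
  obtain (J | ⟨ν, (⟨I, hI⟩ | ⟨I, hI⟩)⟩) := g
  · exact conj_mem s k _ _ (pow_k_mem s k _)
  · exact conj_mem s k _ _ (commutator_mem s k _ _)
  · exact conj_mem s k _ _ (Subgroup.mul_mem _ (pow_k_mem s k _) (commutator_mem s k _ _))

theorem range_gens (hs : 3 ≤ s) (hk : 2 ≤ k) :
    (FreeGroup.lift (gens s k)).range = R s k := by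
  apply le_antisymm
  · rw [FreeGroup.range_lift_eq_closure, Subgroup.closure_le]
    rintro w ⟨g, rfl⟩
    exact gens_mem s k g
  · intro w hw
    have h0 := main_crossed s k hs hk w 0
    have hw1 : phi s k w = 1 := hw
    rw [hw1, toAdd_one, add_zero, trv_zero s k hk, one_mul, inv_one, mul_one] at h0
    exact ⟨_, h0⟩

theorem leftinv (hs : 3 ≤ s) (hk : 2 ≤ k) (z : FreeGroup (genIdx s k)) :
    beta s k hk ((Psi s k (FreeGroup.lift (gens s k) z)).left) = z ∧
      phi s k (FreeGroup.lift (gens s k) z) = 1 := by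
  induction z using FreeGroup.induction_on with
  | C1 =>
    rw [map_one, map_one, map_one, SemidirectProduct.one_left, map_one]
    exact ⟨rfl, rfl⟩
  | of g =>
    rw [FreeGroup.lift_apply_of]
    exact ⟨beta_gens s k hs hk g, gens_mem s k g⟩
  | inv_of g _ =>
    rw [map_inv,
      FreeGroup.lift_apply_of, map_inv, SemidirectProduct.inv_left, Psi_right,
      show phi s k (gens s k g) = 1 from gens_mem s k g, inv_one, act_one_apply, map_inv,
      beta_gens s k hs hk g, map_inv, show phi s k (gens s k g) = 1 from gens_mem s k g,
      inv_one]
    exact ⟨rfl, rfl⟩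
  | mul u v ihu ihv =>
    constructor
    · rw [map_mul, map_mul, SemidirectProduct.mul_left, Psi_right, ihu.2, act_one_apply,
        map_mul, ihu.1, ihv.1]
    · rw [map_mul, map_mul, ihu.2, ihv.2, mul_one]

end Key

section Count

variable (s k : ℕ)

theorem countA (hs : 3 ≤ s) (hk : 2 ≤ k) : Nat.card (idxA s k) = k ^ (s - 2) := by
  rw [Nat.card_eq_fintype_card, Fintype.card_fun, Fintype.card_fin, Fintype.card_fin]

def equivB' (hk : 2 ≤ k) (ν : Fin (s - 2)) :
    (Fin (s - 1) → Fin k) ≃ idxB' s k ν × Fin k where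
  toFun I := (⟨Function.update I (cast2 s ν) ⟨0, by omega⟩, by
      rw [Function.update_self]⟩, I (cast2 s ν))
  invFun p := Function.update p.1.val (cast2 s ν) p.2
  left_inv I := by
    funext t
    show Function.update (Function.update I (cast2 s ν) ⟨0, by omega⟩) (cast2 s ν)
      (I (cast2 s ν)) t = I t
    by_cases ht : t = cast2 s ν
    · subst ht
      rw [Function.update_self]
    · rw [Function.update_of_ne ht, Function.update_of_ne ht]
  right_inv p := by
    obtain ⟨⟨J, hJ⟩, c⟩ := p
    refine Prod.ext ?_ ?_
    · apply Subtype.ext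
      funext t
      show Function.update (Function.update J (cast2 s ν) c) (cast2 s ν) ⟨0, by omega⟩ t = J t
      by_cases ht : t = cast2 s ν
      · subst ht
        rw [Function.update_self]
        apply Fin.ext
        simp only [Fin.val_mk]
        omega
      · rw [Function.update_of_ne ht, Function.update_of_ne ht]
    · show Function.update J (cast2 s ν) c (cast2 s ν) = c
      rw [Function.update_self]

theorem countB' (hs : 3 ≤ s) (hk : 2 ≤ k) (ν : Fin (s - 2)) :
    Nat.card (idxB' s k ν) = k ^ (s - 2) := by
  have h1 := Nat.card_congr (equivB' s k hk ν)
  rw [Nat.card_prod, Nat.card_eq_fintype_card, Fintype.card_fun, Fintype.card_fin,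
    Fintype.card_fin, Nat.card_eq_fintype_card (α := Fin k), Fintype.card_fin] at h1
  have h2 : s - 1 = (s - 2) + 1 := by omega
  rw [h2, pow_succ] at h1
  exact Nat.eq_of_mul_eq_mul_right (by omega) h1.symm

def glue (ν : Fin (s - 2)) (f : Fin (ν : ℕ) → Fin k) (c : Fin k)
    (g : Fin (s - 2 - (ν : ℕ)) → Fin k) : Fin (s - 1) → Fin k := fun t =>
  if h : (t : ℕ) < (ν : ℕ) then f ⟨(t : ℕ), h⟩
  else if h' : (t : ℕ) = (ν : ℕ) then c
  else g ⟨(t : ℕ) - (ν : ℕ) - 1, by have h1 := t.2; have h2 := ν.2; omega⟩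

theorem glue_lo (ν : Fin (s - 2)) (f : Fin (ν : ℕ) → Fin k) (c : Fin k)
    (g : Fin (s - 2 - (ν : ℕ)) → Fin k) (t : Fin (s - 1)) (h : (t : ℕ) < (ν : ℕ)) :
    glue s k ν f c g t = f ⟨(t : ℕ), h⟩ := dif_pos h

theorem glue_mid (ν : Fin (s - 2)) (f : Fin (ν : ℕ) → Fin k) (c : Fin k)
    (g : Fin (s - 2 - (ν : ℕ)) → Fin k) (t : Fin (s - 1)) (h : (t : ℕ) = (ν : ℕ)) :
    glue s k ν f c g t = c := by
  rw [glue, dif_neg (by omega), dif_pos h]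

theorem glue_hi (ν : Fin (s - 2)) (f : Fin (ν : ℕ) → Fin k) (c : Fin k)
    (g : Fin (s - 2 - (ν : ℕ)) → Fin k) (t : Fin (s - 1)) (h : (ν : ℕ) < (t : ℕ)) :
    glue s k ν f c g t =
      g ⟨(t : ℕ) - (ν : ℕ) - 1, by have h1 := t.2; have h2 := ν.2; omega⟩ := by
  rw [glue, dif_neg (by omega), dif_neg (by omega)]

def equivB (hs : 3 ≤ s) (hk : 2 ≤ k) (ν : Fin (s - 2)) :
    idxB s k ν ≃ (Fin (ν : ℕ) → Fin k) × {c : Fin k // (c : ℕ) ≤ k - 2} ×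
      {g : Fin (s - 2 - (ν : ℕ)) → Fin k // g ≠ fun _ => ⟨0, by omega⟩} where
  toFun p :=
    (fun m => p.val ⟨(m : ℕ), by have h1 := m.2; have h2 := ν.2; omega⟩,
     ⟨p.val (cast2 s ν), p.2.1⟩,
     ⟨fun m => p.val ⟨(m : ℕ) + (ν : ℕ) + 1, by have h1 := m.2; omega⟩, by
        intro hzero
        obtain ⟨t, ht1, ht2⟩ := p.2.2
        have ht3 := t.2
        have h4 := congrFun hzero ⟨(t : ℕ) - (ν : ℕ) - 1, by omega⟩
        simp only at h4
        apply ht2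
        have h5 : t = (⟨(t : ℕ) - (ν : ℕ) - 1 + (ν : ℕ) + 1, by omega⟩ : Fin (s - 1)) :=
          Fin.ext (by simp only [Fin.val_mk]; omega)
        rw [h5, h4]⟩)
  invFun q :=
    ⟨glue s k ν q.1 q.2.1.val q.2.2.val, by
      constructor
      · rw [glue_mid s k ν _ _ _ _ rfl]
        exact q.2.1.2
      · have hne : ∃ m, q.2.2.val m ≠ ⟨0, by omega⟩ := by
          by_contra hc
          push_neg at hc
          exact q.2.2.2 (funext hc)
        obtain ⟨m, hm⟩ := hne
        have hm2 := m.2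
        refine ⟨⟨(m : ℕ) + (ν : ℕ) + 1, by omega⟩, by simp only [Fin.val_mk]; omega, ?_⟩
        rw [glue_hi s k ν _ _ _ _ (by simp only [Fin.val_mk]; omega)]
        have h6 : (⟨((⟨(m : ℕ) + (ν : ℕ) + 1, by omega⟩ : Fin (s - 1)) : ℕ) - (ν : ℕ) - 1,
            by simp only [Fin.val_mk]; omega⟩ : Fin (s - 2 - (ν : ℕ))) = m :=
          Fin.ext (by simp only [Fin.val_mk]; omega)
        rw [show q.2.2.val (⟨((⟨(m : ℕ) + (ν : ℕ) + 1, by omega⟩ : Fin (s - 1)) : ℕ)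
            - (ν : ℕ) - 1, by simp only [Fin.val_mk]; omega⟩ : Fin (s - 2 - (ν : ℕ)))
          = q.2.2.val m from congrArg _ h6]
        intro hc
        exact hm (Fin.ext hc)⟩
  left_inv p := by
    apply Subtype.ext
    funext t
    show glue s k ν _ _ _ t = p.val t
    by_cases h : (t : ℕ) < (ν : ℕ)
    · rw [glue_lo s k ν _ _ _ t h]
    · by_cases h' : (t : ℕ) = (ν : ℕ)
      · rw [glue_mid s k ν _ _ _ t h']
        exact congrArg p.val (Fin.ext (by simp only [cast2, Fin.coe_castLE]; omega))
      · rw [glue_hi s k ν _ _ _ t (by omega)]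
        exact congrArg p.val (Fin.ext (by simp only [Fin.val_mk]; omega))
  right_inv q := by
    obtain ⟨f, c, g⟩ := q
    refine Prod.ext ?_ (Prod.ext ?_ ?_)
    · funext m
      show glue s k ν _ _ _ _ = f m
      rw [glue_lo s k ν _ _ _ _ (show ((⟨(m : ℕ), by have h1 := m.2; have h2 := ν.2; omega⟩ :
        Fin (s - 1)) : ℕ) < (ν : ℕ) from m.2)]
    · apply Subtype.ext
      show glue s k ν _ _ _ _ = c.val
      rw [glue_mid s k ν _ _ _ _ rfl]
    · apply Subtype.ext
      funext m
      show glue s k ν _ _ _ _ = g.val m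
      rw [glue_hi s k ν _ _ _ _ (show ((ν : ℕ)) < ((⟨(m : ℕ) + (ν : ℕ) + 1,
        by have h1 := m.2; omega⟩ : Fin (s - 1)) : ℕ) from by simp only [Fin.val_mk]; omega)]
      exact congrArg g.val (Fin.ext (by simp only [Fin.val_mk]; omega))

theorem countB (hs : 3 ≤ s) (hk : 2 ≤ k) (ν : Fin (s - 2)) :
    Nat.card (idxB s k ν) = (k - 1) * k ^ (ν : ℕ) * (k ^ (s - 2 - (ν : ℕ)) - 1) := by
  rw [Nat.card_congr (equivB s k hs hk ν), Nat.card_prod, Nat.card_prod]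
  have c1 : Nat.card (Fin (ν : ℕ) → Fin k) = k ^ (ν : ℕ) := by
    rw [Nat.card_eq_fintype_card, Fintype.card_fun, Fintype.card_fin, Fintype.card_fin]
  have c2 : Nat.card {c : Fin k // (c : ℕ) ≤ k - 2} = k - 1 := by
    rw [Nat.card_congr (show {c : Fin k // (c : ℕ) ≤ k - 2} ≃ Fin (k - 1) from
      { toFun := fun c => ⟨(c.val : ℕ), by have h1 := c.val.isLt; have h2 := c.2; omega⟩
        invFun := fun m => ⟨⟨(m : ℕ), by have := m.isLt; omega⟩, by
          show ((⟨(m : ℕ), by have := m.isLt; omega⟩ : Fin k) : ℕ) ≤ k - 2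
          simp only [Fin.val_mk]
          have := m.isLt
          omega⟩
        left_inv := fun c => Subtype.ext (Fin.ext rfl)
        right_inv := fun m => Fin.ext rfl }), Nat.card_eq_fintype_card, Fintype.card_fin]
  have c3 : Nat.card {g : Fin (s - 2 - (ν : ℕ)) → Fin k // g ≠ fun _ => ⟨0, by omega⟩} =
      k ^ (s - 2 - (ν : ℕ)) - 1 := by
    rw [Nat.card_eq_fintype_card, Fintype.card_subtype_compl, Fintype.card_subtype_eq,
      Fintype.card_fun, Fintype.card_fin, Fintype.card_fin]
  rw [c1, c2, c3]
  ring

end Count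


/-- `R_{k,s-1}` is freely generated by `A ∪ ⋃_ν (B_ν ∪ B'_ν)`: the
homomorphism `FreeGroup (genIdx s k) → F_{s-1}` determined by the listed elements is
injective with image exactly `R_{k,s-1}`; moreover `#A = k^{s-2}`,
`#B_ν = (k-1)·k^{ν-1}·(k^{s-1-ν} - 1)` and `#B'_ν = k^{s-2}` (stated for the Lean
index `ν`, i.e. mathematical `ν+1`). -/
theorem statement11 (s k : ℕ) (hs : 3 ≤ s) (hk : 2 ≤ k) :
    Function.Injective ⇑(FreeGroup.lift (gens s k)) ∧
    (FreeGroup.lift (gens s k)).range = R s k ∧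
    Nat.card (idxA s k) = k ^ (s - 2) ∧
    (∀ ν : Fin (s - 2),
      Nat.card (idxB s k ν) = (k - 1) * k ^ (ν : ℕ) * (k ^ (s - 2 - (ν : ℕ)) - 1)) ∧
    (∀ ν : Fin (s - 2), Nat.card (idxB' s k ν) = k ^ (s - 2)) := by
  refine ⟨?_, range_gens s k hs hk, countA s k hs hk, fun ν => countB s k hs hk ν,
    fun ν => countB' s k hs hk ν⟩
  intro z z' h
  have h1 := (leftinv s k hs hk z).1
  have h2 := (leftinv s k hs hk z').1
  rw [← h1, ← h2, h]

end GenFermat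
end
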